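/- arXiv:1511.00763 — 10 statements merged into one kernel-verified Lean document; each statement's English description precedes it below -/
import Mathlib

section
/- If X and Y are fractional ideals of an order R in a number field with XY = R, then X is generated as an R-module by at most two elements. -/
/-- The colon (quotient) of two `ℤ`-submodules of a field `K`:
`(J : I) = {x ∈ K : x I ⊆ J}`. -/
def colonSub {K : Type*} [Field K] (J I : Submodule ℤ K) : Submodule ℤ K where
  carrier := {x : K | ∀ y ∈ I, x * y ∈ J}
  add_mem' := by
    intro a b ha hb y hy
    have := J.add_mem (ha y hy) (hb y hy)
    simpa [add_mul] using this
  zero_mem' := by intro y hy; simp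
  smul_mem' := by
    intro c x hx y hy
    rw [smul_mul_assoc]
    exact J.smul_mem c (hx y hy)

/-- An order in a number field `K`: a subring of `K` which is a finitely generated
`ℤ`-module of full rank (it spans `K` over `ℚ`). -/
structure IsOrder {K : Type*} [Field K] [Algebra ℚ K] (R : Submodule ℤ K) : Prop where
  one_mem : (1 : K) ∈ R
  mul_le : R * R ≤ R
  fg : R.FG
  spans : Submodule.span ℚ (R : Set K) = ⊤

/-- A fractional ideal of the order `R`: a nonzero finitely generated `ℤ`-submodule of `K`
stable under multiplication by `R`. -/
def IsFracIdealOf {K : Type*} [Field K] (R I : Submodule ℤ K) : Prop :=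
  I ≠ ⊥ ∧ I.FG ∧ R * I ≤ I

set_option synthInstance.maxHeartbeats 1000000
set_option maxHeartbeats 1000000

lemma aux_exists_int_smul_mem {K : Type*} [Field K] [CharZero K] (N : Submodule ℤ K) {x : K}
    (hx : x ∈ Submodule.span ℚ (N : Set K)) : ∃ n : ℤ, n ≠ 0 ∧ n • x ∈ N := by
  induction hx using Submodule.span_induction with
  | mem z hz => exact ⟨1, one_ne_zero, by simpa using hz⟩
  | zero => exact ⟨1, one_ne_zero, by simp⟩
  | add u v _ _ ihu ihv =>
    obtain ⟨m, hm, hmu⟩ := ihu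
    obtain ⟨n, hn, hnv⟩ := ihv
    refine ⟨m * n, mul_ne_zero hm hn, ?_⟩
    have h1 : (m * n) • (u + v) = n • (m • u) + m • (n • v) := by
      simp only [zsmul_eq_mul]
      push_cast
      ring
    rw [h1]
    exact N.add_mem (N.smul_mem n hmu) (N.smul_mem m hnv)
  | smul q u _ ihu =>
    obtain ⟨n, hn, hnu⟩ := ihu
    refine ⟨(q.den : ℤ) * n, mul_ne_zero (Int.natCast_ne_zero.mpr q.den_nz) hn, ?_⟩
    have h1 : ((q.den : ℤ) * n) • (q • u) = q.num • (n • u) := by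
      simp only [zsmul_eq_mul, Rat.smul_def]
      rw [Rat.cast_def]
      have hd : ((q.den : K)) ≠ 0 := by
        exact_mod_cast Nat.cast_ne_zero.mpr q.den_nz
      field_simp
      push_cast
      ring
    rw [h1]
    exact N.smul_mem q.num hnu

lemma aux_span_rat_top {K : Type*} [Field K] [Algebra ℚ K] {R : Submodule ℤ K}
    (htop : Submodule.span ℚ (R : Set K) = ⊤)
    (N : Submodule ℤ K) (hN : N ≠ ⊥) (hRN : R * N ≤ N) :
    Submodule.span ℚ (N : Set K) = ⊤ := by
  obtain ⟨z, hzN, hz⟩ := (Submodule.ne_bot_iff N).mp hN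
  rw [eq_top_iff]
  intro k _
  have hk : k * z⁻¹ ∈ Submodule.span ℚ (R : Set K) := by rw [htop]; trivial
  have key : ∀ w ∈ Submodule.span ℚ (R : Set K), w * z ∈ Submodule.span ℚ (N : Set K) := by
    intro w hw
    induction hw using Submodule.span_induction with
    | mem r hr => exact Submodule.subset_span (hRN (Submodule.mul_mem_mul hr hzN))
    | zero => rw [zero_mul]; exact zero_mem _
    | add a b _ _ ha hb => rw [add_mul]; exact add_mem ha hb
    | smul q a _ ha => rw [smul_mul_assoc]; exact Submodule.smul_mem _ q ha
  have h2 := key _ hk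
  rwa [mul_assoc, inv_mul_cancel₀ hz, mul_one] at h2

def auxIdeal {K : Type*} [Field K] (R' : Subring K) (N : Submodule ℤ K)
    (hRN : ∀ r ∈ R', ∀ x ∈ N, r * x ∈ N) : Ideal R' where
  carrier := {x : R' | (x : K) ∈ N}
  add_mem' := by intro x y hx hy; exact N.add_mem hx hy
  zero_mem' := N.zero_mem
  smul_mem' := by intro c x hx; exact hRN c c.2 x hx

def auxPull {K : Type*} [Field K] (R' : Subring K) (M : Ideal R') : Submodule ℤ K where
  carrier := Subtype.val '' (M : Set R')
  add_mem' := by rintro x y ⟨x', hx', rfl⟩ ⟨y', hy', rfl⟩; exact ⟨x' + y', M.add_mem hx' hy', rfl⟩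
  zero_mem' := ⟨0, M.zero_mem, rfl⟩
  smul_mem' := by
    rintro c x ⟨x', hx', rfl⟩
    exact ⟨c • x', M.toAddSubgroup.zsmul_mem hx' c, by simp⟩

lemma mem_auxPull {K : Type*} [Field K] {R' : Subring K} {M : Ideal R'} {x : R'}
    (hx : x ∈ M) : (x : K) ∈ auxPull R' M := ⟨x, hx, rfl⟩

lemma of_mem_auxPull {K : Type*} [Field K] {R' : Subring K} {M : Ideal R'} {x : K}
    (hx : x ∈ auxPull R' M) (h : x ∈ R') : (⟨x, h⟩ : R') ∈ M := by
  obtain ⟨x', hx', he⟩ := hx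
  have hxx : x' = ⟨x, h⟩ := Subtype.ext he
  rwa [hxx] at hx'

theorem stmt0' {K : Type*} [Field K] [NumberField K]
    (R X Y : Submodule ℤ K)
    (h1R : (1:K) ∈ R) (hRR : R * R ≤ R) (hRfg : R.FG) (hRsp : Submodule.span ℚ (R : Set K) = ⊤)
    (hX0 : X ≠ ⊥) (hRX : R * X ≤ X)
    (hY0 : Y ≠ ⊥) (hRY : R * Y ≤ Y)
    (hXY : X * Y = R) :
    ∃ a b : K, X = R * Submodule.span ℤ {a, b} := by
  classical
  obtain ⟨a, haX, ha0⟩ := (Submodule.ne_bot_iff X).mp hX0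
  obtain ⟨y₀, hy₀Y, hy₀0⟩ := (Submodule.ne_bot_iff Y).mp hY0
  set J : Submodule ℤ K := Submodule.span ℤ {a} * Y with hJdef
  have hJR : J ≤ R := hXY ▸ mul_le_mul'
    ((Submodule.span_singleton_le_iff_mem a X).mpr haX) le_rfl
  have hRJ : R * J ≤ J := by
    rw [hJdef, mul_left_comm]
    exact mul_le_mul' le_rfl hRY
  let R' : Subring K :=
  { carrier := R
    one_mem' := h1R
    mul_mem' := fun hx hy => hRR (Submodule.mul_mem_mul hx hy)
    add_mem' := fun hx hy => R.add_mem hx hy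
    zero_mem' := R.zero_mem
    neg_mem' := fun hx => R.neg_mem hx }
  have hmemR' : ∀ x : K, x ∈ R' ↔ x ∈ R := fun x => Iff.rfl
  let JI : Ideal R' := auxIdeal R' J (fun r hr x hx => hRJ (Submodule.mul_mem_mul hr hx))
  have hJ0 : J ≠ ⊥ := by
    intro h
    have hmem : a * y₀ ∈ J := Submodule.mul_mem_mul (Submodule.mem_span_singleton_self a) hy₀Y
    rw [h, Submodule.mem_bot] at hmem
    exact mul_ne_zero ha0 hy₀0 hmem
  have hJspan : Submodule.span ℚ (J : Set K) = ⊤ := aux_span_rat_top hRsp J hJ0 hRJ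
  haveI hfR : Module.Finite ℤ R := Module.Finite.iff_fg.mpr hRfg
  haveI hfR' : Module.Finite ℤ R' := by
    let f : R →ₗ[ℤ] R' :=
    { toFun := fun x => ⟨x.1, x.2⟩
      map_add' := fun x y => rfl
      map_smul' := fun n x => rfl }
    exact Module.Finite.of_surjective f (fun y => ⟨⟨y.1, y.2⟩, rfl⟩)
  haveI hfQ : Module.Finite ℤ (R' ⧸ JI) := Module.Finite.of_surjective
    ((Ideal.Quotient.mk JI).toAddMonoidHom.toIntLinearMap) Ideal.Quotient.mk_surjective
  haveI hQfin : Finite (R' ⧸ JI) := by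
    apply Module.finite_of_fg_torsion
    intro x
    obtain ⟨r, rfl⟩ := Ideal.Quotient.mk_surjective x
    have hr : (r : K) ∈ Submodule.span ℚ (J : Set K) := by rw [hJspan]; trivial
    obtain ⟨n, hn, hnr⟩ := aux_exists_int_smul_mem J hr
    refine ⟨⟨n, mem_nonZeroDivisors_of_ne_zero hn⟩, ?_⟩
    show n • (Ideal.Quotient.mk JI r) = 0
    have hmz : (Ideal.Quotient.mk JI) (n • r) = n • (Ideal.Quotient.mk JI r) :=
      map_zsmul (Ideal.Quotient.mk JI) n r
    rw [← hmz, Ideal.Quotient.eq_zero_iff_mem]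
    show ((n • r : R') : K) ∈ J
    simpa using hnr
  haveI : Finite (Ideal (R' ⧸ JI)) :=
    Finite.of_injective (fun I : Ideal (R' ⧸ JI) => (I : Set (R' ⧸ JI))) SetLike.coe_injective
  haveI hsub : Finite {M : Ideal R' // JI ≤ M} := by
    apply Finite.of_injective
      (fun M : {M : Ideal R' // JI ≤ M} => (M.1.map (Ideal.Quotient.mk JI) : Ideal (R' ⧸ JI)))
    intro M N h
    have e1 : M.1 = Ideal.comap (Ideal.Quotient.mk JI) (Ideal.map (Ideal.Quotient.mk JI) M.1) := by
      rw [Ideal.comap_map_of_surjective _ Ideal.Quotient.mk_surjective,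
        ← RingHom.ker_eq_comap_bot, Ideal.mk_ker]
      exact (sup_eq_left.mpr M.2).symm
    have e2 : N.1 = Ideal.comap (Ideal.Quotient.mk JI) (Ideal.map (Ideal.Quotient.mk JI) N.1) := by
      rw [Ideal.comap_map_of_surjective _ Ideal.Quotient.mk_surjective,
        ← RingHom.ker_eq_comap_bot, Ideal.mk_ker]
      exact (sup_eq_left.mpr N.2).symm
    apply Subtype.ext
    rw [e1, e2]
    simpa using congrArg (Ideal.comap (Ideal.Quotient.mk JI)) h
  have hMfin : {M : Ideal R' | JI ≤ M ∧ M.IsMaximal}.Finite := by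
    have h1 : {M : Ideal R' | JI ≤ M}.Finite := Set.finite_coe_iff.mp hsub
    exact h1.subset (fun M hM => hM.1)
  set S : Finset (Ideal R') := hMfin.toFinset with hSdef
  have hmemS : ∀ M : Ideal R', M ∈ S ↔ JI ≤ M ∧ M.IsMaximal := by
    intro M; rw [hSdef, Set.Finite.mem_toFinset]; rfl
  have hex : ∀ M : Ideal R', ∃ x, x ∈ X ∧ ∃ y, y ∈ Y ∧ (M ∈ S → x * y ∉ auxPull R' M) := by
    intro M
    by_cases hM : M ∈ S
    · obtain ⟨hJIM, hMmax⟩ := (hmemS M).mp hM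
      have hex1 : ∃ x ∈ X, ∃ y ∈ Y, x * y ∉ auxPull R' M := by
        by_contra hcon
        push_neg at hcon
        have hle : X * Y ≤ auxPull R' M := Submodule.mul_le.mpr hcon
        rw [hXY] at hle
        have h1 : (1:K) ∈ auxPull R' M := hle h1R
        have h2 : (1 : R') ∈ M := of_mem_auxPull h1 R'.one_mem
        exact hMmax.ne_top ((Ideal.eq_top_iff_one M).mpr h2)
      obtain ⟨x, hx, y, hy, hxy⟩ := hex1
      exact ⟨x, hx, y, hy, fun _ => hxy⟩
    · exact ⟨a, haX, y₀, hy₀Y, fun h => absurd h hM⟩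
  choose xf hxfX yf hyfY hxykey using hex
  have hee : ∀ M : Ideal R', ∃ e : R',
      M ∈ S → (e ∉ M ∧ ∀ M' ∈ S, M' ≠ M → e ∈ M') := by
    intro M
    by_cases hM : M ∈ S
    · obtain ⟨hJIM, hMmax⟩ := (hmemS M).mp hM
      have hc : ∀ M' : Ideal R', ∃ c : R', M' ∈ S.erase M → c ∈ M' ∧ c ∉ M := by
        intro M'
        by_cases hM' : M' ∈ S.erase M
        · have hM'S : M' ∈ S := Finset.mem_of_mem_erase hM'
          have hne : M' ≠ M := Finset.ne_of_mem_erase hM'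
          obtain ⟨hJIM', hM'max⟩ := (hmemS M').mp hM'S
          have hnle : ¬ M' ≤ M := fun hle => hne (hM'max.eq_of_le hMmax.ne_top hle)
          obtain ⟨cc, hc1, hc2⟩ := SetLike.not_le_iff_exists.mp hnle
          exact ⟨cc, fun _ => ⟨hc1, hc2⟩⟩
        · exact ⟨1, fun h => absurd h hM'⟩
      choose c hc using hc
      refine ⟨∏ M' ∈ S.erase M, c M', fun _ => ⟨?_, fun M' hM'S hne => ?_⟩⟩
      · intro hmem
        haveI := hMmax.isPrime
        obtain ⟨M', hM', hcM'⟩ := (Ideal.IsPrime.prod_mem_iff).mp hmem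
        exact ((hc M' hM').2) hcM'
      · have hM'e : M' ∈ S.erase M := Finset.mem_erase.mpr ⟨hne, hM'S⟩
        rw [← Finset.mul_prod_erase _ _ hM'e]
        exact Ideal.mul_mem_right _ _ ((hc M' hM'e).1)
    · exact ⟨1, fun h => absurd h hM⟩
  choose ef hef using hee
  set b : K := ∑ M ∈ S, (ef M : K) * xf M with hbdef
  have hbX : b ∈ X := Submodule.sum_mem _ (fun M _ => hRX (Submodule.mul_mem_mul (ef M).2 (hxfX M)))
  set T : Submodule ℤ K := J ⊔ (Submodule.span ℤ {b} * Y) with hTdef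
  have hTR : T ≤ R := sup_le hJR
    (hXY ▸ mul_le_mul' ((Submodule.span_singleton_le_iff_mem b X).mpr hbX) le_rfl)
  have hRT : R * T ≤ T := by
    rw [hTdef, Submodule.mul_sup]
    apply sup_le
    · exact le_trans hRJ le_sup_left
    · rw [mul_left_comm]
      exact le_trans (mul_le_mul' le_rfl hRY) le_sup_right
  let TI : Ideal R' := auxIdeal R' T (fun r hr x hx => hRT (Submodule.mul_mem_mul hr hx))
  have hJITI : JI ≤ TI := fun x hx => Submodule.mem_sup_left hx
  have hTtop : TI = ⊤ := by
    by_contra hne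
    obtain ⟨M₀, hM₀max, hTIM₀⟩ := Ideal.exists_le_maximal TI hne
    have hM₀S : M₀ ∈ S := (hmemS M₀).mpr ⟨le_trans hJITI hTIM₀, hM₀max⟩
    have hbyT : b * yf M₀ ∈ T := Submodule.mem_sup_right
      (Submodule.mul_mem_mul (Submodule.mem_span_singleton_self b) (hyfY M₀))
    have hbyR : b * yf M₀ ∈ R' := hTR hbyT
    have hbyM₀ : (⟨b * yf M₀, hbyR⟩ : R') ∈ M₀ :=
      hTIM₀ (show (⟨b * yf M₀, hbyR⟩ : R') ∈ TI from hbyT)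
    have hxyR : ∀ M : Ideal R', xf M * yf M₀ ∈ R' := fun M => by
      have h3 : xf M * yf M₀ ∈ X * Y := Submodule.mul_mem_mul (hxfX M) (hyfY M₀)
      rw [hXY] at h3; exact h3
    have hsum : (⟨b * yf M₀, hbyR⟩ : R') = ∑ M ∈ S, ef M * (⟨xf M * yf M₀, hxyR M⟩ : R') := by
      apply Subtype.ext
      push_cast
      rw [hbdef, Finset.sum_mul]
      exact Finset.sum_congr rfl (fun M _ => (mul_assoc _ _ _))
    have hsummem : (∑ M ∈ S, ef M * (⟨xf M * yf M₀, hxyR M⟩ : R')) ∈ M₀ := hsum ▸ hbyM₀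
    rw [← Finset.add_sum_erase S _ hM₀S] at hsummem
    have hrest : (∑ M ∈ S.erase M₀, ef M * (⟨xf M * yf M₀, hxyR M⟩ : R')) ∈ M₀ :=
      Submodule.sum_mem _ (fun M hM => by
        have hMS : M ∈ S := Finset.mem_of_mem_erase hM
        have hne2 : M₀ ≠ M := (Finset.ne_of_mem_erase hM).symm
        exact Ideal.mul_mem_right _ _ (((hef M) hMS).2 M₀ hM₀S hne2))
    have hterm : ef M₀ * (⟨xf M₀ * yf M₀, hxyR M₀⟩ : R') ∈ M₀ :=
      (Submodule.add_mem_iff_left _ hrest).mp hsummem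
    rcases (hM₀max.isPrime.mem_or_mem hterm) with h | h
    · exact ((hef M₀) hM₀S).1 h
    · exact (hxykey M₀ hM₀S) (mem_auxPull h)
  have h1T : (1:K) ∈ T := by
    have h4 : (1 : R') ∈ TI := hTtop ▸ Submodule.mem_top
    exact h4
  have hTReq : T = R := by
    apply le_antisymm hTR
    intro r hr
    have h2 : r * 1 ∈ R * T := Submodule.mul_mem_mul hr h1T
    rw [mul_one] at h2
    exact hRT h2
  refine ⟨a, b, ?_⟩
  have hXR : X * R = X := by
    apply le_antisymm
    · rw [mul_comm]; exact hRX
    · intro x hx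
      have h5 := Submodule.mul_mem_mul hx h1R
      rwa [mul_one] at h5
  calc X = X * R := hXR.symm
    _ = X * T := by rw [hTReq]
    _ = Submodule.span ℤ {a} * (X * Y) ⊔ Submodule.span ℤ {b} * (X * Y) := by
          rw [hTdef, Submodule.mul_sup, hJdef, mul_left_comm X (Submodule.span ℤ {a}) Y,
            mul_left_comm X (Submodule.span ℤ {b}) Y]
    _ = Submodule.span ℤ {a} * R ⊔ Submodule.span ℤ {b} * R := by rw [hXY]
    _ = R * Submodule.span ℤ {a, b} := by
          rw [show ({a, b} : Set K) = insert a {b} from rfl, Submodule.span_insert,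
            Submodule.mul_sup, mul_comm R, mul_comm R]

/-- If `X` and `Y` are fractional ideals of an order `R` in a number field with `XY = R`,
then `X` is generated as an `R`-module by at most two elements. -/
theorem stmt0 {K : Type*} [Field K] [NumberField K]
    (R X Y : Submodule ℤ K) (hR : IsOrder R)
    (hX : IsFracIdealOf R X) (hY : IsFracIdealOf R Y)
    (hXY : X * Y = R) :
    ∃ a b : K, X = R * Submodule.span ℤ {a, b} :=
  stmt0' R X Y hR.one_mem hR.mul_le hR.fg hR.spans hX.1 hX.2.2 hY.1 hY.2.2 hXY
end

section
/- Let θ be an algebraic integer of degree n > 2, R₀ = Z[θ], I = Z + Zθ + 2Zθ² + ... + 2Zθ^{n-1}, and R = Z + 2Zθ + ... + 2Zθ^{n-1}. Then R = (I:I), i.e., R is the coefficient ring of I. -/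
/-- The `ℤ`-module `ℤ + ℤθ + ⋯ + ℤθ^k + 2ℤθ^{k+1} + ⋯ + 2ℤθ^{n-1}`. -/
noncomputable def mixedSpan {K : Type*} [Field K] (θ : K) (n k : ℕ) : Submodule ℤ K :=
  Submodule.span ℤ (Set.range fun i : Fin n =>
    (if (i : ℕ) ≤ k then 1 else 2) * θ ^ (i : ℕ))

/-- The order `R = ℤ + 2ℤθ + 2ℤθ² + ⋯ + 2ℤθ^{n-1}`. -/
noncomputable def suborderR {K : Type*} [Field K] (θ : K) (n : ℕ) : Submodule ℤ K :=
  Submodule.span ℤ (Set.range fun i : Fin n =>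
    (if (i : ℕ) = 0 then 1 else 2) * θ ^ (i : ℕ))

open Polynomial Finset

section aux
variable {K : Type*} [Field K] [CharZero K] {n : ℕ} {θ : K}

lemma coeff_unique (hint : IsIntegral ℤ θ) (hdeg : (minpoly ℚ θ).natDegree = n)
    {a b : ℕ → ℤ} (h : ∑ i ∈ range n, a i • θ ^ i = ∑ i ∈ range n, b i • θ ^ i) :
    ∀ i < n, a i = b i := by
  have hQ : LinearIndependent ℚ fun i : Fin n => θ ^ (i : ℕ) := by
    subst hdeg; exact linearIndependent_pow θ
  have hLI : LinearIndependent ℤ fun i : Fin n => θ ^ (i : ℕ) :=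
    hQ.restrict_scalars (fun a b h => by simpa using h)
  rw [Fintype.linearIndependent_iff] at hLI
  intro i hi
  have h0 : ∑ j : Fin n, (a j - b j) • θ ^ (j : ℕ) = 0 := by
    simp only [sub_smul, Finset.sum_sub_distrib]
    rw [Fin.sum_univ_eq_sum_range (fun i => a i • θ ^ i),
      Fin.sum_univ_eq_sum_range (fun i => b i • θ ^ i), h, sub_self]
  have := hLI _ h0 ⟨i, hi⟩
  simp only [Fin.val_mk] at this
  omega

lemma mem_span_gen {c : ℕ → ℤ} {x : K} :
    x ∈ Submodule.span ℤ (Set.range fun i : Fin n => ((c (i : ℕ) : ℤ) : K) * θ ^ (i : ℕ)) ↔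
    ∃ a : ℕ → ℤ, x = ∑ i ∈ range n, (a i * c i) • θ ^ i := by
  rw [Submodule.mem_span_range_iff_exists_fun]
  constructor
  · rintro ⟨a, rfl⟩
    refine ⟨fun i => if h : i < n then a ⟨i, h⟩ else 0, ?_⟩
    rw [← Fin.sum_univ_eq_sum_range]
    refine (Finset.sum_congr rfl fun i _ => ?_).symm
    show ((if h : (i : ℕ) < n then a ⟨(i : ℕ), h⟩ else 0) * c (i : ℕ)) • θ ^ (i : ℕ)
        = a i • ((c (i : ℕ) : K) * θ ^ (i : ℕ))
    rw [dif_pos i.isLt, zsmul_eq_mul, zsmul_eq_mul]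
    push_cast
    ring
  · rintro ⟨a, rfl⟩
    refine ⟨fun i => a i, ?_⟩
    rw [← Fin.sum_univ_eq_sum_range (fun i => (a i * c i) • θ ^ i)]
    refine Finset.sum_congr rfl fun i _ => ?_
    rw [zsmul_eq_mul, zsmul_eq_mul]
    push_cast
    ring

lemma mem_ite_span_iff (P : ℕ → Prop) [DecidablePred P] {x : K} :
    x ∈ Submodule.span ℤ (Set.range fun i : Fin n =>
        (if P (i : ℕ) then (1 : K) else 2) * θ ^ (i : ℕ)) ↔
    ∃ a : ℕ → ℤ, x = ∑ i ∈ range n, (a i * (if P i then 1 else 2)) • θ ^ i := by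
  have hfe : (fun i : Fin n => (if P (i : ℕ) then (1 : K) else 2) * θ ^ (i : ℕ))
      = fun i : Fin n => (((if P (i : ℕ) then (1 : ℤ) else 2) : ℤ) : K) * θ ^ (i : ℕ) := by
    funext i; split <;> simp
  rw [hfe]
  exact mem_span_gen (c := fun i => if P i then 1 else 2)

lemma mem_I_iff {x : K} :
    x ∈ mixedSpan θ n 1 ↔
    ∃ a : ℕ → ℤ, x = ∑ i ∈ range n, (a i * (if i ≤ 1 then 1 else 2)) • θ ^ i :=
  mem_ite_span_iff (fun i => i ≤ 1)

lemma mem_R_iff {x : K} :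
    x ∈ suborderR θ n ↔
    ∃ a : ℕ → ℤ, x = ∑ i ∈ range n, (a i * (if i = 0 then 1 else 2)) • θ ^ i :=
  mem_ite_span_iff (fun i => i = 0)

lemma theta_n_eq (hn : 0 < n) (hint : IsIntegral ℤ θ) (hdeg : (minpoly ℚ θ).natDegree = n) :
    θ ^ n = ∑ i ∈ range n, (-(minpoly ℤ θ).coeff i) • θ ^ i := by
  have hdZ : (minpoly ℤ θ).natDegree = n := by
    rw [minpoly.isIntegrallyClosed_eq_field_fractions' ℚ hint] at hdeg
    rwa [(minpoly.monic hint).natDegree_map] at hdeg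
  have hp := minpoly.aeval ℤ θ
  rw [Polynomial.aeval_eq_sum_range, hdZ, Finset.sum_range_succ] at hp
  have hmon : (minpoly ℤ θ).coeff n = 1 := by
    have := (minpoly.monic hint).coeff_natDegree
    rwa [hdZ] at this
  rw [hmon, one_smul] at hp
  have h2 : θ ^ n = -∑ i ∈ range n, (minpoly ℤ θ).coeff i • θ ^ i := by
    linear_combination hp
  rw [h2, ← Finset.sum_neg_distrib]
  exact Finset.sum_congr rfl fun i _ => (neg_smul _ _).symm

lemma theta_pow_mem (hn : 0 < n) (hint : IsIntegral ℤ θ) (hdeg : (minpoly ℚ θ).natDegree = n)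
    (m : ℕ) : θ ^ m ∈ Submodule.span ℤ (Set.range fun i : Fin n => θ ^ (i : ℕ)) := by
  induction m using Nat.strong_induction_on with
  | _ m IH =>
    by_cases h : m < n
    · exact Submodule.subset_span ⟨⟨m, h⟩, rfl⟩
    · push_neg at h
      have key : θ ^ m = ∑ i ∈ range n, (-(minpoly ℤ θ).coeff i) • θ ^ (m - n + i) := by
        have h1 : θ ^ m = θ ^ (m - n) * θ ^ n := by
          rw [← pow_add]; congr 1; omega
        rw [h1, theta_n_eq hn hint hdeg, Finset.mul_sum]
        refine Finset.sum_congr rfl fun i _ => ?_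
        rw [mul_smul_comm, ← pow_add]
      rw [key]
      exact Submodule.sum_mem _ fun i hi =>
        Submodule.smul_mem _ _ (IH _ (by have := Finset.mem_range.1 hi; omega))

lemma two_theta_pow_mem (hn : 0 < n) (hint : IsIntegral ℤ θ)
    (hdeg : (minpoly ℚ θ).natDegree = n) (m : ℕ) : 2 * θ ^ m ∈ mixedSpan θ n 1 := by
  have hgen : ∀ i : Fin n, 2 * θ ^ (i : ℕ) ∈ mixedSpan θ n 1 := by
    intro i
    by_cases h : (i : ℕ) ≤ 1
    · have he : 2 * θ ^ (i : ℕ)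
          = (2 : ℤ) • ((if (i : ℕ) ≤ 1 then (1 : K) else 2) * θ ^ (i : ℕ)) := by
        rw [if_pos h, one_mul, zsmul_eq_mul]; norm_num
      rw [he]
      exact Submodule.smul_mem _ _ (Submodule.subset_span ⟨i, rfl⟩)
    · have he : 2 * θ ^ (i : ℕ) = (if (i : ℕ) ≤ 1 then (1 : K) else 2) * θ ^ (i : ℕ) := by
        rw [if_neg h]
      rw [he]
      exact Submodule.subset_span ⟨i, rfl⟩
  suffices h : ∀ x ∈ Submodule.span ℤ (Set.range fun i : Fin n => θ ^ (i : ℕ)),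
      2 * x ∈ mixedSpan θ n 1 by
    exact h _ (theta_pow_mem hn hint hdeg m)
  intro x hx
  induction hx using Submodule.span_induction with
  | mem y hy => obtain ⟨i, rfl⟩ := hy; exact hgen i
  | zero => simpa using (mixedSpan θ n 1).zero_mem
  | add y z hy hz hy' hz' => rw [mul_add]; exact Submodule.add_mem _ hy' hz'
  | smul c y hy hy' => rw [mul_smul_comm]; exact Submodule.smul_mem _ _ hy'

end aux

/-- Let `θ` be an algebraic integer of degree `n > 2`,
`I = ℤ + ℤθ + 2ℤθ² + ⋯ + 2ℤθ^{n-1}` and `R = ℤ + 2ℤθ + ⋯ + 2ℤθ^{n-1}`.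
Then `R = (I : I)` is the coefficient ring of `I`. -/
theorem stmt1 {K : Type*} [Field K] [CharZero K] {n : ℕ} (hn : 2 < n)
    (θ : K) (hint : IsIntegral ℤ θ) (hdeg : (minpoly ℚ θ).natDegree = n) :
    suborderR θ n = colonSub (mixedSpan θ n 1) (mixedSpan θ n 1) := by
  have hn0 : 0 < n := by omega
  apply le_antisymm
  · -- R ⊆ (I : I)
    rw [suborderR, Submodule.span_le]
    rintro _ ⟨i, rfl⟩
    intro y hy
    induction hy using Submodule.span_induction with
    | mem z hz =>
      obtain ⟨j, rfl⟩ := hz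
      show (if (i : ℕ) = 0 then (1 : K) else 2) * θ ^ (i : ℕ)
          * ((if (j : ℕ) ≤ 1 then (1 : K) else 2) * θ ^ (j : ℕ)) ∈ mixedSpan θ n 1
      by_cases h0 : (i : ℕ) = 0
      · have : (if (i : ℕ) = 0 then (1 : K) else 2) * θ ^ (i : ℕ) = 1 := by
          rw [if_pos h0, h0]; simp
        rw [this, one_mul]
        exact Submodule.subset_span ⟨j, rfl⟩
      · by_cases hj : (j : ℕ) ≤ 1
        · have he : (if (i : ℕ) = 0 then (1 : K) else 2) * θ ^ (i : ℕ)
              * ((if (j : ℕ) ≤ 1 then (1 : K) else 2) * θ ^ (j : ℕ))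
              = 2 * θ ^ ((i : ℕ) + (j : ℕ)) := by
            rw [if_neg h0, if_pos hj, pow_add]; ring
          rw [he]
          exact two_theta_pow_mem hn0 hint hdeg _
        · have he : (if (i : ℕ) = 0 then (1 : K) else 2) * θ ^ (i : ℕ)
              * ((if (j : ℕ) ≤ 1 then (1 : K) else 2) * θ ^ (j : ℕ))
              = (2 : ℤ) • (2 * θ ^ ((i : ℕ) + (j : ℕ))) := by
            rw [if_neg h0, if_neg hj, pow_add, zsmul_eq_mul]; push_cast; ring
          rw [he]
          exact Submodule.smul_mem _ _ (two_theta_pow_mem hn0 hint hdeg _)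
    | zero => rw [mul_zero]; exact Submodule.zero_mem _
    | add y z hy hz hy' hz' => rw [mul_add]; exact Submodule.add_mem _ hy' hz'
    | smul c y hy hy' => rw [mul_smul_comm]; exact Submodule.smul_mem _ _ hy'
  · -- (I : I) ⊆ R
    intro x hx
    have hx' : ∀ y ∈ mixedSpan θ n 1, x * y ∈ mixedSpan θ n 1 := hx
    have h1I : (1 : K) ∈ mixedSpan θ n 1 := by
      refine Submodule.subset_span ⟨⟨0, hn0⟩, ?_⟩
      simp
    have hθI : θ ∈ mixedSpan θ n 1 := by
      refine Submodule.subset_span ⟨⟨1, by omega⟩, ?_⟩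
      simp
    obtain ⟨a, ha⟩ := mem_I_iff.1 (by simpa using hx' 1 h1I)
    obtain ⟨b, hb⟩ := mem_I_iff.1 (hx' θ hθI)
    set p := minpoly ℤ θ with hp
    set t : ℕ → ℤ := fun i => a i * (if i ≤ 1 then 1 else 2) with ht
    -- compute x * θ in the power basis
    have hxθ : x * θ = ∑ i ∈ range n,
        ((if i = 0 then 0 else t (i - 1)) + t (n - 1) * (-(p.coeff i))) • θ ^ i := by
      have e1 : x * θ = ∑ i ∈ range n, t i • θ ^ (i + 1) := by
        rw [ha, Finset.sum_mul]
        refine Finset.sum_congr rfl fun i _ => ?_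
        rw [smul_mul_assoc, pow_succ]
      set F : ℕ → K := fun j => (if j = 0 then (0 : ℤ) else t (j - 1)) • θ ^ j with hF
      have e2 : ∑ i ∈ range n, t i • θ ^ (i + 1) = ∑ i ∈ range (n + 1), F i := by
        rw [Finset.sum_range_succ']
        simp [hF]
      have e3 : ∑ i ∈ range (n + 1), F i = ∑ i ∈ range n, F i + t (n - 1) • θ ^ n := by
        rw [Finset.sum_range_succ]
        simp only [hF]
        rw [if_neg (by omega : ¬ n = 0)]
      have e4 : t (n - 1) • θ ^ n = ∑ i ∈ range n, (t (n - 1) * (-(p.coeff i))) • θ ^ i := by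
        rw [theta_n_eq hn0 hint hdeg, Finset.smul_sum]
        refine Finset.sum_congr rfl fun i _ => ?_
        rw [smul_smul]
      rw [e1, e2, e3, e4, ← Finset.sum_add_distrib]
      refine Finset.sum_congr rfl fun i _ => ?_
      simp only [hF]
      rw [add_smul]
    rw [hb] at hxθ
    have hco := coeff_unique hint hdeg hxθ 2 hn
    -- hco : b 2 * 2 = t 1 + t (n-1) * (-(p.coeff 2))
    have hcIn1 : ¬ (n - 1 ≤ 1) := by omega
    have ha1 : a 1 = 2 * (b 2 + a (n - 1) * p.coeff 2) := by
      simp only [ht] at hco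
      norm_num at hco
      rw [if_neg (show ¬ n ≤ 2 by omega)] at hco
      linarith [hco]
    rw [mem_R_iff]
    refine ⟨Function.update a 1 (b 2 + a (n - 1) * p.coeff 2), ?_⟩
    rw [ha]
    refine Finset.sum_congr rfl fun i _ => ?_
    have hcoeff : a i * (if i ≤ 1 then 1 else 2)
        = Function.update a 1 (b 2 + a (n - 1) * p.coeff 2) i * (if i = 0 then 1 else 2) := by
      rw [Function.update_apply]
      by_cases h0 : i = 0
      · subst h0; norm_num
      · by_cases h1 : i = 1
        · subst h1
          rw [if_pos rfl, if_pos (by norm_num), if_neg (by norm_num), mul_one]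
          linarith [ha1]
        · rw [if_neg h1, if_neg (by omega), if_neg (by omega)]
    rw [hcoeff]
end

section
/- Let θ be an algebraic integer of degree n > 2, R₀ = Z[θ], I = Z + Zθ + 2Zθ² + ... + 2Zθ^{n-1}, and R = Z + 2Zθ + ... + 2Zθ^{n-1}. Then for each 0 < k < n-1, I^k = Z + Zθ + ... + Zθ^k + 2Zθ^{k+1} + ... + 2Zθ^{n-1}, and I^{n-1} = R₀. -/
section auxStmt2
variable {K : Type*} [Field K] [CharZero K] {n : ℕ} {θ : K}

set_option linter.unusedSectionVars false in
lemma full_span_pow (hint : IsIntegral ℤ θ) (hdeg : (minpoly ℚ θ).natDegree = n)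
    (m : ℕ) : θ ^ m ∈ Submodule.span ℤ (Set.range fun i : Fin n => θ ^ (i : ℕ)) := by
  have hdZ : (minpoly ℤ θ).natDegree = n := by
    have := minpoly.isIntegrallyClosed_eq_field_fractions' ℚ hint
    rw [this] at hdeg
    rwa [(minpoly.monic hint).natDegree_map] at hdeg
  have h0 : θ ^ m ∈ Algebra.adjoin ℤ {θ} :=
    pow_mem (Algebra.subset_adjoin (Set.mem_singleton θ)) m
  have h1 : θ ^ m ∈ Subalgebra.toSubmodule (Algebra.adjoin ℤ {θ}) :=
    (Subalgebra.mem_toSubmodule _).mpr h0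
  rw [← Submodule.span_range_natDegree_eq_adjoin (minpoly.monic hint)
    (minpoly.aeval ℤ θ), hdZ] at h1
  refine Submodule.span_mono ?_ h1
  intro x hx
  simp only [Finset.coe_image, Finset.coe_range, Set.mem_image, Set.mem_Iio] at hx
  obtain ⟨i, hi, rfl⟩ := hx
  exact ⟨⟨i, hi⟩, rfl⟩


set_option linter.unusedSectionVars false in
lemma mem_one_pow {k m : ℕ} (hm : m < n) (hmk : m ≤ k) :
    θ ^ m ∈ mixedSpan θ n k := by
  have heq : θ ^ m = (fun i : Fin n =>
      (if (i : ℕ) ≤ k then 1 else 2) * θ ^ (i : ℕ)) ⟨m, hm⟩ := by simp [hmk]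
  rw [mixedSpan, heq]
  exact Submodule.subset_span (Set.mem_range_self _)

lemma mem_two_pow (hint : IsIntegral ℤ θ) (hdeg : (minpoly ℚ θ).natDegree = n)
    (k m : ℕ) : 2 * θ ^ m ∈ mixedSpan θ n k := by
  set M := mixedSpan θ n k with hM
  set L : K →ₗ[ℤ] K := LinearMap.mulLeft ℤ (2 : K) with hL
  have hle : Submodule.span ℤ (Set.range fun i : Fin n => θ ^ (i : ℕ)) ≤ M.comap L := by
    rw [Submodule.span_le]
    rintro x ⟨i, rfl⟩
    have hgen : (if (i : ℕ) ≤ k then 1 else 2) * θ ^ (i : ℕ) ∈ M :=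
      Submodule.subset_span ⟨i, rfl⟩
    simp only [SetLike.mem_coe, Submodule.mem_comap]
    rw [hL, LinearMap.mulLeft_apply]
    by_cases hik : (i : ℕ) ≤ k
    · rw [if_pos hik, one_mul] at hgen
      have h2 := M.smul_mem (2 : ℤ) hgen
      rw [zsmul_eq_mul] at h2
      simpa using h2
    · rwa [if_neg hik] at hgen
  have h2 := hle (full_span_pow hint hdeg m)
  rw [Submodule.mem_comap] at h2
  rwa [hL, LinearMap.mulLeft_apply] at h2

lemma step_mul (hint : IsIntegral ℤ θ) (hdeg : (minpoly ℚ θ).natDegree = n)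
    {k : ℕ} (hk : k + 1 ≤ n - 1) (hn : 2 < n) :
    mixedSpan θ n k * mixedSpan θ n 1 = mixedSpan θ n (k + 1) := by
  have h0n : 0 < n := by omega
  have h1n : 1 < n := by omega
  have hkn : k < n := by omega
  apply le_antisymm
  · rw [mixedSpan, mixedSpan, Submodule.span_mul_span, Submodule.span_le]
    rintro x ⟨a, ⟨i, rfl⟩, b, ⟨j, rfl⟩, rfl⟩
    show _ ∈ mixedSpan θ n (k + 1)
    by_cases hi : (i : ℕ) ≤ k
    · by_cases hj : (j : ℕ) ≤ 1
      · simp only [hi, hj, if_true, one_mul]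
        rw [← pow_add]
        exact mem_one_pow (by omega) (by omega)
      · simp only [hi, hj, if_true, if_false, one_mul]
        have heq : θ ^ (i : ℕ) * (2 * θ ^ (j : ℕ)) = 2 * θ ^ ((i : ℕ) + (j : ℕ)) := by
          rw [pow_add]; ring
        rw [heq]
        exact mem_two_pow hint hdeg _ _
    · by_cases hj : (j : ℕ) ≤ 1
      · simp only [hi, hj, if_true, if_false, one_mul]
        have heq : 2 * θ ^ (i : ℕ) * θ ^ (j : ℕ) = 2 * θ ^ ((i : ℕ) + (j : ℕ)) := by
          rw [pow_add]; ring
        rw [heq]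
        exact mem_two_pow hint hdeg _ _
      · simp only [hi, hj, if_false]
        have heq : 2 * θ ^ (i : ℕ) * (2 * θ ^ (j : ℕ)) =
            (2 : ℤ) • (2 * θ ^ ((i : ℕ) + (j : ℕ))) := by
          rw [zsmul_eq_mul, pow_add]
          push_cast
          ring
        rw [heq]
        exact (mixedSpan θ n (k + 1)).smul_mem _ (mem_two_pow hint hdeg _ _)
  · simp only [mixedSpan]
    rw [Submodule.span_mul_span, Submodule.span_le]
    rintro x ⟨i, rfl⟩
    simp only [SetLike.mem_coe]
    by_cases hi : (i : ℕ) ≤ k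
    · have hmul := Set.mul_mem_mul
        (Set.mem_range_self (f := fun i' : Fin n =>
          (if (i' : ℕ) ≤ k then 1 else 2) * θ ^ (i' : ℕ)) i)
        (Set.mem_range_self (f := fun j : Fin n =>
          (if (j : ℕ) ≤ 1 then 1 else 2) * θ ^ (j : ℕ)) ⟨0, h0n⟩)
      have h := Submodule.subset_span (R := ℤ) hmul
      simpa [hi, show (i : ℕ) ≤ k + 1 by omega] using h
    · by_cases hi1 : (i : ℕ) ≤ k + 1
      · have hik : (i : ℕ) = k + 1 := by omega
        have hmul := Set.mul_mem_mul
          (Set.mem_range_self (f := fun i' : Fin n =>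
            (if (i' : ℕ) ≤ k then 1 else 2) * θ ^ (i' : ℕ)) ⟨k, hkn⟩)
          (Set.mem_range_self (f := fun j : Fin n =>
            (if (j : ℕ) ≤ 1 then 1 else 2) * θ ^ (j : ℕ)) ⟨1, h1n⟩)
        have h := Submodule.subset_span (R := ℤ) hmul
        simpa [hi1, hik, pow_succ] using h
      · have hmul := Set.mul_mem_mul
          (Set.mem_range_self (f := fun i' : Fin n =>
            (if (i' : ℕ) ≤ k then 1 else 2) * θ ^ (i' : ℕ)) i)
          (Set.mem_range_self (f := fun j : Fin n =>
            (if (j : ℕ) ≤ 1 then 1 else 2) * θ ^ (j : ℕ)) ⟨0, h0n⟩)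
        have h := Submodule.subset_span (R := ℤ) hmul
        simpa [hi, hi1] using h

end auxStmt2

/-- Let `θ` be an algebraic integer of degree `n > 2` and
`I = ℤ + ℤθ + 2ℤθ² + ⋯ + 2ℤθ^{n-1}`. Then for each `0 < k < n-1`,
`I^k = ℤ + ℤθ + ⋯ + ℤθ^k + 2ℤθ^{k+1} + ⋯ + 2ℤθ^{n-1}`, and
`I^{n-1} = R₀ = ℤ[θ]`. -/
theorem stmt2 {K : Type*} [Field K] [CharZero K] {n : ℕ} (hn : 2 < n)
    (θ : K) (hint : IsIntegral ℤ θ) (hdeg : (minpoly ℚ θ).natDegree = n) :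
    (∀ k : ℕ, 0 < k → k < n - 1 → (mixedSpan θ n 1) ^ k = mixedSpan θ n k) ∧
    (mixedSpan θ n 1) ^ (n - 1) =
      Submodule.span ℤ (Set.range fun i : Fin n => θ ^ (i : ℕ)) := by
  have key : ∀ k : ℕ, 0 < k → k ≤ n - 1 → (mixedSpan θ n 1) ^ k = mixedSpan θ n k := by
    intro k
    induction k with
    | zero => intro h _; exact absurd h (lt_irrefl 0)
    | succ k ih =>
      intro _ hk1
      rcases Nat.eq_zero_or_pos k with rfl | hkpos
      · rw [pow_one]
      · rw [pow_succ, ih hkpos (by omega), step_mul hint hdeg (by omega) hn]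
  constructor
  · intro k hk0 hk1
    exact key k hk0 (by omega)
  · have hset : (Set.range fun i : Fin n => (if (i : ℕ) ≤ n - 1 then 1 else 2) * θ ^ (i : ℕ))
        = Set.range fun i : Fin n => θ ^ (i : ℕ) := by
      apply congrArg Set.range
      funext i
      rw [if_pos (by have := i.isLt; omega : (i : ℕ) ≤ n - 1), one_mul]
    rw [key (n - 1) (by omega) le_rfl, mixedSpan, hset]
end

section
/- Let θ be an algebraic integer of degree n > 2 and I = Z + Zθ + 2Zθ² + ... + 2Zθ^{n-1} with coefficient ring R = Z + 2Zθ + ... + 2Zθ^{n-1}. Then I is not invertible in R, i.e., there is no fractional ideal J with IJ = R. -/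
/-- Let `θ` be an algebraic integer of degree `n > 2`,
`I = ℤ + ℤθ + 2ℤθ² + ⋯ + 2ℤθ^{n-1}` with coefficient ring
`R = ℤ + 2ℤθ + ⋯ + 2ℤθ^{n-1}`. Then `I` is not invertible in `R`:
there is no fractional ideal `J` with `IJ = R`. -/
theorem stmt3 {K : Type*} [Field K] [CharZero K] {n : ℕ} (hn : 2 < n)
    (θ : K) (hint : IsIntegral ℤ θ) (hdeg : (minpoly ℚ θ).natDegree = n) :
    ¬ ∃ J : Submodule ℤ K, mixedSpan θ n 1 * J = suborderR θ n := by
  rintro ⟨J, hJ⟩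
  have hn0 : 0 < n := by omega
  set P : Submodule ℤ K := Submodule.span ℤ (Set.range fun i : Fin n => θ ^ (i : ℕ)) with hP
  -- degree of minpoly over ℤ
  have hdZ : (minpoly ℤ θ).natDegree = n := by
    have h := minpoly.isIntegrallyClosed_eq_field_fractions ℚ K hint
    simp only [Algebra.algebraMap_self_apply] at h
    rw [h, Polynomial.natDegree_map_eq_of_injective
      (fun a b hab => by exact_mod_cast hab : Function.Injective (algebraMap ℤ ℚ))] at hdeg
    exact hdeg
  have hgenP : ∀ m : ℕ, m < n → θ ^ m ∈ P := fun m hm =>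
    Submodule.subset_span ⟨⟨m, hm⟩, rfl⟩
  -- θ^n lies in P
  have hθn : θ ^ n ∈ P := by
    have h0 := minpoly.aeval ℤ θ
    rw [Polynomial.aeval_eq_sum_range (p := minpoly ℤ θ) θ, hdZ, Finset.sum_range_succ] at h0
    have hcoef : (minpoly ℤ θ).coeff n = 1 := by
      have := (minpoly.monic hint).coeff_natDegree
      rwa [hdZ] at this
    rw [hcoef, one_smul] at h0
    have hxn : θ ^ n = -∑ i ∈ Finset.range n, (minpoly ℤ θ).coeff i • θ ^ i := by
      linear_combination h0
    rw [hxn]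
    exact neg_mem (Submodule.sum_mem _ fun i hi =>
      Submodule.smul_mem _ _ (hgenP i (Finset.mem_range.mp hi)))
  -- P is closed under multiplication by θ
  have hmulθ : ∀ x ∈ P, θ * x ∈ P := by
    intro x hx
    induction hx using Submodule.span_induction with
    | mem x h =>
      obtain ⟨i, rfl⟩ := h
      by_cases hi : (i : ℕ) + 1 < n
      · have := hgenP ((i : ℕ) + 1) hi
        rwa [pow_succ, mul_comm] at this
      · have hi' : (i : ℕ) + 1 = n := by have := i.isLt; omega
        have := hθn
        rw [← hi', pow_succ, mul_comm] at this
        exact this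
    | zero => simp
    | add x y _ _ hx hy => simpa [mul_add] using add_mem hx hy
    | smul c x _ hx =>
      rw [mul_smul_comm]
      exact Submodule.smul_mem _ c hx
  have hpow : ∀ m : ℕ, θ ^ m ∈ P := by
    intro m
    induction m with
    | zero => simpa using hgenP 0 hn0
    | succ m ih =>
      have := hmulθ _ ih
      rwa [← pow_succ'] at this
  have hzsmul : ∀ (z : ℤ) (m : ℕ), (z : K) * θ ^ m ∈ P := fun z m => by
    simpa [zsmul_eq_mul] using P.smul_mem z (hpow m)
  -- generators
  have hgenM : ∀ (k : ℕ) (i : Fin n),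
      (if (i : ℕ) ≤ k then (1 : K) else 2) * θ ^ (i : ℕ) ∈ mixedSpan θ n k :=
    fun k i => Submodule.subset_span ⟨i, rfl⟩
  have hgenR : ∀ i : Fin n,
      (if (i : ℕ) = 0 then (1 : K) else 2) * θ ^ (i : ℕ) ∈ suborderR θ n :=
    fun i => Submodule.subset_span ⟨i, rfl⟩
  have honeM : ∀ k, (1 : K) ∈ mixedSpan θ n k := by
    intro k
    have := hgenM k ⟨0, hn0⟩
    simpa using this
  have honeR : (1 : K) ∈ suborderR θ n := by
    have := hgenR ⟨0, hn0⟩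
    simpa using this
  have hθm : ∀ (k m : ℕ), m ≤ k → m < n → θ ^ m ∈ mixedSpan θ n k := by
    intro k m h1 h2
    have := hgenM k ⟨m, h2⟩
    simpa [h1] using this
  have hθM1 : θ ∈ mixedSpan θ n 1 := by
    have := hθm 1 1 le_rfl (by omega)
    simpa using this
  -- 2θ^m ∈ mixedSpan for every m
  have h2M : ∀ (k m : ℕ), (2 : K) * θ ^ m ∈ mixedSpan θ n k := by
    intro k m
    have key : ∀ x ∈ P, (2 : K) * x ∈ mixedSpan θ n k := by
      intro x hx
      induction hx using Submodule.span_induction with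
      | mem x h =>
        obtain ⟨i, rfl⟩ := h
        by_cases hik : (i : ℕ) ≤ k
        · have hg := hgenM k i
          rw [if_pos hik, one_mul] at hg
          simpa [zsmul_eq_mul] using Submodule.smul_mem _ (2 : ℤ) hg
        · have hg := hgenM k i
          rwa [if_neg hik] at hg
      | zero => simp
      | add x y _ _ hx hy => simpa [mul_add] using add_mem hx hy
      | smul c x _ hx =>
        rw [mul_smul_comm]
        exact Submodule.smul_mem _ c hx
    exact key _ (hpow m)
  have hMleP : ∀ k, mixedSpan θ n k ≤ P := by
    intro k
    rw [mixedSpan]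
    apply Submodule.span_le.mpr
    rintro x ⟨i, rfl⟩
    dsimp only
    split_ifs
    · simpa using hpow i
    · exact_mod_cast hzsmul 2 i
  have hPP : P * P ≤ P := by
    conv_lhs => rw [hP, Submodule.span_mul_span]
    apply Submodule.span_le.mpr
    rintro x hx
    rw [Set.mem_mul] at hx
    obtain ⟨a, ⟨i, rfl⟩, b, ⟨j, rfl⟩, rfl⟩ := hx
    dsimp only
    rw [← pow_add]
    exact hpow _
  -- I * M(n-2) = P
  have hIM : mixedSpan θ n 1 * mixedSpan θ n (n - 2) = P := by
    apply le_antisymm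
    · conv_lhs => rw [mixedSpan, mixedSpan, Submodule.span_mul_span]
      apply Submodule.span_le.mpr
      rintro x hx
      rw [Set.mem_mul] at hx
      obtain ⟨a, ⟨i, rfl⟩, b, ⟨j, rfl⟩, rfl⟩ := hx
      dsimp only
      rw [SetLike.mem_coe]
      have h4 : ∀ z : ℤ, (z : K) * (θ ^ (i : ℕ) * θ ^ (j : ℕ)) ∈ P := fun z => by
        rw [← pow_add]; exact hzsmul z _
      split_ifs
      · convert h4 1 using 1; push_cast; ring
      · convert h4 2 using 1; push_cast; ring
      · convert h4 2 using 1; push_cast; ring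
      · convert h4 4 using 1; push_cast; ring
    · rw [hP]
      apply Submodule.span_le.mpr
      rintro x ⟨i, rfl⟩
      by_cases him : (i : ℕ) ≤ n - 2
      · have := Submodule.mul_mem_mul (honeM 1) (hθm (n - 2) i him i.isLt)
        simpa using this
      · have hi : (i : ℕ) = n - 1 := by have := i.isLt; omega
        have := Submodule.mul_mem_mul hθM1 (hθm (n - 2) (n - 2) le_rfl (by omega))
        rw [← pow_succ', show n - 2 + 1 = n - 1 by omega, ← hi] at this
        exact this
  -- R * M k = M k
  have hRM : ∀ k, suborderR θ n * mixedSpan θ n k = mixedSpan θ n k := by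
    intro k
    apply le_antisymm
    · conv_lhs => rw [suborderR, mixedSpan, Submodule.span_mul_span]
      apply Submodule.span_le.mpr
      rintro x hx
      rw [Set.mem_mul] at hx
      obtain ⟨a, ⟨i, rfl⟩, b, ⟨j, rfl⟩, rfl⟩ := hx
      dsimp only
      by_cases hi : (i : ℕ) = 0
      · rw [if_pos hi, hi, pow_zero, one_mul, one_mul]
        exact hgenM k j
      · rw [if_neg hi]
        have h2 : ∀ z : ℤ, (z : K) * ((2 : K) * θ ^ ((i : ℕ) + (j : ℕ))) ∈ mixedSpan θ n k :=
          fun z => by simpa [zsmul_eq_mul, mul_assoc] using Submodule.smul_mem _ z (h2M k _)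
        rw [SetLike.mem_coe]
        split_ifs
        · convert h2 1 using 1; push_cast; rw [pow_add]; ring
        · convert h2 2 using 1; push_cast; rw [pow_add]; ring
    · intro x hx
      simpa using Submodule.mul_mem_mul honeR hx
  -- I * P = P
  have hIP : mixedSpan θ n 1 * P = P := by
    apply le_antisymm
    · exact Submodule.mul_le.mpr fun a ha b hb => hPP (Submodule.mul_mem_mul (hMleP 1 ha) hb)
    · intro x hx
      simpa using Submodule.mul_mem_mul (honeM 1) hx
  -- derive M(n-2) = P
  have h1 : P * J = mixedSpan θ n (n - 2) := by
    calc P * J = (mixedSpan θ n 1 * mixedSpan θ n (n - 2)) * J := by rw [hIM]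
    _ = mixedSpan θ n (n - 2) * (mixedSpan θ n 1 * J) := by ring
    _ = mixedSpan θ n (n - 2) * suborderR θ n := by rw [hJ]
    _ = suborderR θ n * mixedSpan θ n (n - 2) := mul_comm _ _
    _ = mixedSpan θ n (n - 2) := hRM (n - 2)
  have h2 : P * J = P := by
    calc P * J = (mixedSpan θ n 1 * P) * J := by rw [hIP]
    _ = mixedSpan θ n 1 * (P * J) := by ring
    _ = mixedSpan θ n 1 * mixedSpan θ n (n - 2) := by rw [h1]
    _ = P := hIM
  have hMP : mixedSpan θ n (n - 2) = P := h1.symm.trans h2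
  -- contradiction: θ^(n-1) ∈ P but not in M(n-2)
  have hmem : θ ^ (n - 1) ∈ mixedSpan θ n (n - 2) := by
    rw [hMP]; exact hgenP (n - 1) (by omega)
  have hli : LinearIndependent ℤ fun i : Fin n => θ ^ (i : ℕ) := by
    have h := linearIndependent_pow (K := ℚ) θ
    rw [hdeg] at h
    exact h.restrict_scalars' ℤ
  rw [mixedSpan, Submodule.mem_span_range_iff_exists_fun] at hmem
  obtain ⟨c, hc⟩ := hmem
  set j : Fin n := ⟨n - 1, by omega⟩ with hj
  have hfin := Fintype.linearIndependent_iff.mp hli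
      (fun i => (if (i : ℕ) ≤ n - 2 then 1 else 2) * c i - (if i = j then 1 else 0)) ?_
  · have hcontra := hfin j
    rw [if_neg (by simp [hj]; omega : ¬((j : ℕ) ≤ n - 2)), if_pos rfl] at hcontra
    omega
  · have hterm : ∀ i : Fin n, ((if (i : ℕ) ≤ n - 2 then (1 : ℤ) else 2) * c i) • θ ^ (i : ℕ)
        = c i • ((if (i : ℕ) ≤ n - 2 then (1 : K) else 2) * θ ^ (i : ℕ)) := by
      intro i
      split_ifs <;> (simp only [zsmul_eq_mul]; push_cast; ring)
    have hsingle : ∑ i : Fin n, (if i = j then (1 : ℤ) else 0) • θ ^ (i : ℕ) = θ ^ (n - 1) := by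
      rw [Finset.sum_eq_single j]
      · simp [hj]
      · intro b _ hb; rw [if_neg hb, zero_smul]
      · intro h; exact absurd (Finset.mem_univ j) h
    simp only [sub_smul]
    rw [Finset.sum_sub_distrib, Finset.sum_congr rfl fun i _ => hterm i, hc, hsingle, sub_self]
end

section
/- Let A, B in GL_n(Z) have the same irreducible characteristic polynomial f(t), with right eigenvectors u of A and v of B for a common root β of f in K = Q[t]/(f). Then the map φ : Λ(A,B) → (J:I) sending X to the θ in K with Xv = θu is an isomorphism of abelian groups, where I and J are the fractional ideals generated over Z by the entries of u and v respectively, and Λ(A,B) = {X ∈ M_n(Z) : AX = XB}. -/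
open Polynomial Matrix Submodule Set

section Aux

lemma mysum_mulVec {R : Type*} [CommRing R] {n : ℕ} {ι : Type*} (s : Finset ι)
    (f : ι → Matrix (Fin n) (Fin n) R) (x : Fin n → R) :
    (∑ i ∈ s, f i) *ᵥ x = ∑ i ∈ s, (f i *ᵥ x) := by
  classical
  induction s using Finset.induction_on with
  | empty => simp
  | insert _ _ h ih => rw [Finset.sum_insert h, Finset.sum_insert h, Matrix.add_mulVec, ih]

lemma myaeval_mulVec {R : Type*} [CommRing R] {n : ℕ} (M : Matrix (Fin n) (Fin n) R)
    (g : Fin n → R) (x : Fin n → R) :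
    (Polynomial.aeval M (∑ i : Fin n, C (g i) * X ^ (i : ℕ))) *ᵥ x
      = ∑ i : Fin n, g i • ((M ^ (i : ℕ)) *ᵥ x) := by
  rw [map_sum, mysum_mulVec]
  refine Finset.sum_congr rfl fun i _ => ?_
  rw [_root_.map_mul, aeval_C, aeval_X_pow, ← Algebra.smul_def, smul_mulVec]

lemma mycoeff_finsum {R : Type*} [CommRing R] {n : ℕ} (g : Fin n → R) (j : Fin n) :
    (∑ i : Fin n, C (g i) * X ^ (i : ℕ)).coeff (j : ℕ) = g j := by
  rw [finset_sum_coeff, Finset.sum_eq_single j]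
  · simp [coeff_C_mul, coeff_X_pow]
  · intro b _ hb
    have : (b : ℕ) ≠ (j : ℕ) := fun h => hb (Fin.val_injective h)
    simp only [coeff_C_mul, coeff_X_pow, if_neg (Ne.symm this), mul_zero]
  · simp

lemma mynatDegree_finsum_lt {R : Type*} [CommRing R] {n : ℕ} (hn : 0 < n) (g : Fin n → R) :
    (∑ i : Fin n, C (g i) * X ^ (i : ℕ)).natDegree < n := by
  refine lt_of_le_of_lt (natDegree_sum_le_of_forall_le _ _ fun i _ => ?_) (Nat.sub_lt hn one_pos)
  exact le_trans ((natDegree_C_mul_le _ _).trans (natDegree_X_pow_le _)) (Nat.le_sub_one_of_lt i.isLt)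

lemma mypoly_eq_finsum {R : Type*} [CommRing R] {n : ℕ} (q : R[X]) (h : q.natDegree < n) :
    q = ∑ i : Fin n, C (q.coeff i) * X ^ (i : ℕ) := by
  conv_lhs => rw [q.as_sum_range' n h]
  rw [← Fin.sum_univ_eq_sum_range fun i => (monomial i) (q.coeff i)]
  simp [C_mul_X_pow_eq_monomial]

end Aux

lemma eigen_scalar {K : Type*} [Field K] [CharZero K] {n : ℕ} (hn : 0 < n)
    (A : Matrix (Fin n) (Fin n) ℤ)
    (hirr : Irreducible (Polynomial.map (Int.castRingHom ℚ) A.charpoly))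
    (β : K) (hβ : Polynomial.aeval β A.charpoly = 0)
    (u w : Fin n → K) (hu0 : u ≠ 0)
    (hu : (A.map (algebraMap ℤ K)) *ᵥ u = β • u)
    (hw : (A.map (algebraMap ℤ K)) *ᵥ w = β • w) :
    ∃ θ : K, w = θ • u := by
  classical
  have i0 : Fin n := ⟨0, hn⟩
  set Aq : Matrix (Fin n) (Fin n) ℚ := A.map (Int.castRingHom ℚ) with hAq
  set A' : Matrix (Fin n) (Fin n) K := A.map (algebraMap ℤ K) with hA'
  set fq : ℚ[X] := A.charpoly.map (Int.castRingHom ℚ) with hfq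
  set fK : K[X] := A.charpoly.map (algebraMap ℤ K) with hfK
  have hfqc : Aq.charpoly = fq := Matrix.charpoly_map A _
  have hfKc : A'.charpoly = fK := Matrix.charpoly_map A _
  have hfqdeg : fq.natDegree = n := by
    rw [← hfqc, Matrix.charpoly_natDegree_eq_dim, Fintype.card_fin]
  have hfKdeg : fK.natDegree = n := by
    rw [← hfKc, Matrix.charpoly_natDegree_eq_dim, Fintype.card_fin]
  have hfKmonic : fK.Monic := (Matrix.charpoly_monic A).map _
  have hfK0 : fK ≠ 0 := hfKmonic.ne_zero
  set eq : Fin n → ℚ := Pi.single i0 (1:ℚ) with heq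
  set eK : Fin n → K := Pi.single i0 (1:K) with heK
  set cq : Fin n → (Fin n → ℚ) := fun i => (Aq ^ (i:ℕ)) *ᵥ eq with hcq
  set cK : Fin n → (Fin n → K) := fun i => (A' ^ (i:ℕ)) *ᵥ eK with hcK
  -- Step 1: linear independence over ℚ
  have hliq : LinearIndependent ℚ cq := by
    rw [Fintype.linearIndependent_iff]
    intro g hg
    set P : ℚ[X] := ∑ i : Fin n, C (g i) * X ^ (i:ℕ) with hP
    have hPe : (aeval Aq P) *ᵥ eq = 0 := by
      rw [hP, myaeval_mulVec]; exact hg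
    have hP0 : P = 0 := by
      by_contra hPne
      have hndvd : ¬ fq ∣ P := by
        intro hdvd
        have h1 := Polynomial.natDegree_le_of_dvd hdvd hPne
        rw [hfqdeg] at h1
        exact absurd h1 (not_le.mpr (mynatDegree_finsum_lt hn g))
      obtain ⟨a, b, hab⟩ := hirr.coprime_iff_not_dvd.mpr hndvd
      have hCH : aeval Aq fq = 0 := by
        rw [← hfqc]; exact Matrix.aeval_self_charpoly Aq
      have h2 : eq = (aeval Aq b) *ᵥ ((aeval Aq P) *ᵥ eq) := by
        conv_lhs => rw [← Matrix.one_mulVec eq, ← _root_.map_one (aeval Aq (R := ℚ)), ← hab]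
        rw [map_add, _root_.map_mul, _root_.map_mul, hCH, mul_zero, zero_add,
          ← Matrix.mulVec_mulVec]
      rw [hPe, Matrix.mulVec_zero] at h2
      have h3 : eq i0 = 0 := by rw [h2]; rfl
      rw [heq, Pi.single_eq_same] at h3
      exact one_ne_zero h3
    intro i
    have h3 := mycoeff_finsum g i
    rw [← hP, hP0] at h3
    simpa using h3.symm
  -- Step 2: transfer linear independence to K
  have hA'q : A' = Aq.map (algebraMap ℚ K) := by
    have hc : ⇑(algebraMap ℤ K) = (⇑(algebraMap ℚ K) ∘ ⇑(Int.castRingHom ℚ)) := by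
      rw [Subsingleton.elim (algebraMap ℤ K) ((algebraMap ℚ K).comp (Int.castRingHom ℚ))]
      rfl
    rw [hA', hc, hAq, Matrix.map_map]
  have heKq : eK = (algebraMap ℚ K) ∘ eq := by
    funext j
    by_cases hj : j = i0 <;> simp [heK, heq, hj, Pi.single_apply]
  have hcompat : ∀ i, cK i = (algebraMap ℚ K) ∘ cq i := by
    intro i
    funext j
    rw [hcK, hcq]
    simp only [Function.comp_apply]
    rw [hA'q, heKq]
    have hpow : (Aq.map (algebraMap ℚ K)) ^ (i:ℕ) = (Aq ^ (i:ℕ)).map (algebraMap ℚ K) := by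
      rw [← RingHom.mapMatrix_apply, ← RingHom.mapMatrix_apply, map_pow]
    rw [hpow]
    exact (RingHom.map_mulVec (algebraMap ℚ K) (Aq ^ (i:ℕ)) eq j).symm
  have hliK : LinearIndependent K cK := by
    set Dq : Matrix (Fin n) (Fin n) ℚ := Matrix.of (fun i j => cq i j) with hDq
    have hDqli : LinearIndependent ℚ (fun i => Dq i) := hliq
    have hDqunit : IsUnit Dq := Matrix.linearIndependent_rows_iff_isUnit.mp hDqli
    have hdet : Dq.det ≠ 0 := ((Matrix.isUnit_iff_isUnit_det _).mp hDqunit).ne_zero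
    set DK : Matrix (Fin n) (Fin n) K := Dq.map (algebraMap ℚ K) with hDK
    have hDKd : DK.det = algebraMap ℚ K Dq.det := by
      rw [hDK, ← RingHom.mapMatrix_apply, ← RingHom.map_det]
    have hDKdet : IsUnit DK.det := by
      rw [hDKd]
      exact isUnit_iff_ne_zero.mpr
        (fun h => hdet ((algebraMap ℚ K).injective (by rw [h, map_zero])))
    have hDKli : LinearIndependent K (fun i => DK i) :=
      Matrix.linearIndependent_rows_iff_isUnit.mpr ((Matrix.isUnit_iff_isUnit_det _).mpr hDKdet)
    have : (fun i => DK i) = cK := by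
      funext i
      rw [hcompat i]
      rfl
    rwa [this] at hDKli
  -- Step 3: kernel ideal
  have hCHK : aeval A' fK = 0 := by rw [← hfKc]; exact Matrix.aeval_self_charpoly A'
  have hker : ∀ q : K[X], (aeval A' q) *ᵥ eK = 0 → fK ∣ q := by
    intro q hq
    rw [← Polynomial.modByMonic_eq_zero_iff_dvd hfKmonic]
    set r := q %ₘ fK with hr
    have hrq : r = q - fK * (q /ₘ fK) := by
      rw [hr, eq_sub_iff_add_eq]
      exact Polynomial.modByMonic_add_div q fK
    have hre : (aeval A' r) *ᵥ eK = 0 := by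
      rw [hrq, map_sub, _root_.map_mul, hCHK, zero_mul, sub_zero, hq]
    have hrdeg : r.natDegree < n := by
      rw [← hfKdeg]
      refine Polynomial.natDegree_modByMonic_lt q hfKmonic ?_
      intro h1
      rw [h1, Polynomial.natDegree_one] at hfKdeg
      omega
    have hexp := mypoly_eq_finsum r hrdeg
    have hsum0 : ∑ i : Fin n, r.coeff (i:ℕ) • cK i = 0 := by
      have h5 := myaeval_mulVec A' (fun i : Fin n => r.coeff (i:ℕ)) eK
      rw [← hexp] at h5
      simp only [hcK]
      rw [← h5]
      exact hre
    have hcoef : ∀ i : Fin n, r.coeff (i:ℕ) = 0 :=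
      Fintype.linearIndependent_iff.mp hliK _ hsum0
    rw [hexp]
    simp [hcoef]
  -- Step 4: factor fK
  have hroot : fK.IsRoot β := by
    rw [Polynomial.IsRoot, hfK, Polynomial.eval_map, ← Polynomial.aeval_def]
    exact hβ
  set g : K[X] := fK /ₘ (X - C β) with hg
  have hfact : (X - C β) * g = fK := Polynomial.mul_divByMonic_eq_iff_isRoot.mpr hroot
  set w0 : Fin n → K := (aeval A' g) *ᵥ eK with hw0
  haveI : Nonempty (Fin n) := ⟨i0⟩
  set bK : Module.Basis (Fin n) K (Fin n → K) :=
    basisOfLinearIndependentOfCardEqFinrank hliK (by rw [Module.finrank_pi]) with hbK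
  have hbKc : ∀ i, bK i = cK i := fun i => by
    rw [hbK, coe_basisOfLinearIndependentOfCardEqFinrank]
  have claim : ∀ z : Fin n → K, A' *ᵥ z = β • z → ∃ θ : K, z = θ • w0 := by
    intro z hz
    have hrep : ∑ i, bK.repr z i • cK i = z := by
      conv_rhs => rw [← bK.sum_repr z]
      exact Finset.sum_congr rfl fun i _ => by rw [hbKc]
    set p : K[X] := ∑ i : Fin n, C (bK.repr z i) * X ^ (i:ℕ) with hp
    have hpz : (aeval A' p) *ᵥ eK = z := by
      rw [hp, myaeval_mulVec]; exact hrep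
    have h0 : (aeval A' ((X - C β) * p)) *ᵥ eK = 0 := by
      rw [_root_.map_mul, ← Matrix.mulVec_mulVec, hpz, map_sub, aeval_X, aeval_C,
        Matrix.sub_mulVec, hz, Algebra.algebraMap_eq_smul_one, Matrix.smul_mulVec,
        Matrix.one_mulVec, sub_self]
    have hdvd : fK ∣ (X - C β) * p := hker _ h0
    rw [← hfact] at hdvd
    have hXC0 : (X - C β : K[X]) ≠ 0 := Polynomial.X_sub_C_ne_zero β
    have hgp : g ∣ p := (mul_dvd_mul_iff_left hXC0).mp hdvd
    obtain ⟨t, hpt⟩ := hgp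
    by_cases ht : t = 0
    · refine ⟨0, ?_⟩
      rw [zero_smul, ← hpz, hpt, ht, mul_zero, map_zero, Matrix.zero_mulVec]
    · have hg0 : g ≠ 0 := by
        intro h
        rw [h, mul_zero] at hfact
        exact hfK0 hfact.symm
      have hdeg_g : g.natDegree = n - 1 := by
        have h1 := Polynomial.natDegree_mul hXC0 hg0
        rw [hfact, hfKdeg, Polynomial.natDegree_X_sub_C] at h1
        omega
      have hdegp : p.natDegree < n := mynatDegree_finsum_lt hn _
      have htdeg : t.natDegree = 0 := by
        have h2 := Polynomial.natDegree_mul hg0 ht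
        rw [← hpt, hdeg_g] at h2
        omega
      refine ⟨t.coeff 0, ?_⟩
      have htC : t = C (t.coeff 0) := Polynomial.eq_C_of_natDegree_eq_zero htdeg
      rw [← hpz, hpt]
      conv_lhs => rw [htC]
      rw [_root_.map_mul, aeval_C, Algebra.algebraMap_eq_smul_one,
        mul_smul_comm, mul_one, Matrix.smul_mulVec, hw0]
  obtain ⟨θu, hθu⟩ := claim u hu
  obtain ⟨θw, hθw⟩ := claim w hw
  have hθu0 : θu ≠ 0 := by
    intro h
    rw [h, zero_smul] at hθu
    exact hu0 hθu
  refine ⟨θw * θu⁻¹, ?_⟩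
  rw [hθw, hθu, smul_smul, mul_assoc, inv_mul_cancel₀ hθu0, mul_one]

lemma entries_li {K : Type*} [Field K] [CharZero K] {n : ℕ} (hn : 0 < n)
    (A : Matrix (Fin n) (Fin n) ℤ)
    (hirr : Irreducible (Polynomial.map (Int.castRingHom ℚ) A.charpoly))
    (β : K) (hβ : Polynomial.aeval β A.charpoly = 0)
    (u : Fin n → K) (hu0 : u ≠ 0)
    (hu : (A.map (algebraMap ℤ K)) *ᵥ u = β • u) :
    LinearIndependent ℤ u := by
  classical
  obtain ⟨i0, hi0⟩ : ∃ i, u i ≠ 0 := by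
    by_contra h
    push_neg at h
    exact hu0 (funext h)
  set V : Submodule ℚ K := Submodule.span ℚ (Set.range u) with hV
  have hstep : ∀ i, β * u i = ∑ j, (A i j : ℚ) • u j := by
    intro i
    have h1 := congrFun hu i
    simp only [Matrix.mulVec, dotProduct, Matrix.map_apply, Pi.smul_apply,
      smul_eq_mul] at h1
    rw [← h1]
    refine Finset.sum_congr rfl fun j _ => ?_
    rw [Algebra.smul_def]
    norm_num
  have hpow : ∀ (k : ℕ) (i : Fin n), β ^ k * u i ∈ V := by
    intro k
    induction k with
    | zero =>
      intro i
      simpa using Submodule.subset_span (Set.mem_range_self i)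
    | succ k ih =>
      intro i
      have h2 : β ^ (k+1) * u i = ∑ j, (A i j : ℚ) • (β ^ k * u j) := by
        have : β ^ (k+1) * u i = β ^ k * (β * u i) := by ring
        rw [this, hstep i, Finset.mul_sum]
        refine Finset.sum_congr rfl fun j _ => ?_
        rw [Algebra.smul_def, Algebra.smul_def]
        ring
      rw [h2]
      exact Submodule.sum_mem _ fun j _ => Submodule.smul_mem _ _ (ih j)
  have hmonicq : (Polynomial.map (Int.castRingHom ℚ) A.charpoly).Monic :=
    (Matrix.charpoly_monic A).map _
  have hrootq : Polynomial.aeval β (Polynomial.map (Int.castRingHom ℚ) A.charpoly) = 0 := by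
    rw [show (Int.castRingHom ℚ) = algebraMap ℤ ℚ from rfl, Polynomial.aeval_map_algebraMap]
    exact hβ
  have hmin : minpoly ℚ β = Polynomial.map (Int.castRingHom ℚ) A.charpoly :=
    (minpoly.eq_of_irreducible_of_monic hirr hrootq hmonicq).symm
  have hdegmin : (minpoly ℚ β).natDegree = n := by
    rw [hmin, (Matrix.charpoly_monic A).natDegree_map, Matrix.charpoly_natDegree_eq_dim,
      Fintype.card_fin]
  have hpw : LinearIndependent ℚ (fun k : Fin n => β ^ (k:ℕ) * u i0) := by
    rw [Fintype.linearIndependent_iff]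
    intro g hg
    have hsum : (∑ k : Fin n, g k • β ^ (k:ℕ)) * u i0 = 0 := by
      rw [Finset.sum_mul, ← hg]
      exact Finset.sum_congr rfl fun k _ => (smul_mul_assoc _ _ _)
    have hsum0 : ∑ k : Fin n, g k • β ^ (k:ℕ) = 0 := by
      rcases mul_eq_zero.mp hsum with h | h
      · exact h
      · exact absurd h hi0
    set P : ℚ[X] := ∑ k : Fin n, C (g k) * X ^ (k:ℕ) with hP
    have hPβ : Polynomial.aeval β P = 0 := by
      rw [hP, map_sum, ← hsum0]
      refine Finset.sum_congr rfl fun k _ => ?_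
      rw [_root_.map_mul, Polynomial.aeval_C, Polynomial.aeval_X_pow, Algebra.smul_def]
    have hP0 : P = 0 := by
      by_contra hPne
      have hdvd := minpoly.dvd ℚ β hPβ
      have hled := Polynomial.natDegree_le_of_dvd hdvd hPne
      rw [hdegmin] at hled
      exact absurd hled (not_le.mpr (mynatDegree_finsum_lt hn g))
    intro k
    have h3 := mycoeff_finsum g k
    rw [← hP, hP0] at h3
    simpa using h3.symm
  haveI hfinV : FiniteDimensional ℚ V := FiniteDimensional.span_of_finite ℚ (Set.finite_range u)
  have hle : Submodule.span ℚ (Set.range (fun k : Fin n => β ^ (k:ℕ) * u i0)) ≤ V := by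
    rw [Submodule.span_le]
    rintro x ⟨k, rfl⟩
    exact hpow k i0
  have h2 : n ≤ Module.finrank ℚ V := by
    have h1 : Module.finrank ℚ
        (Submodule.span ℚ (Set.range (fun k : Fin n => β ^ (k:ℕ) * u i0))) = n := by
      rw [finrank_span_eq_card hpw, Fintype.card_fin]
    rw [← h1]
    exact Submodule.finrank_mono hle
  have hub : Module.finrank ℚ V ≤ n := by
    rw [hV]
    refine le_trans (finrank_span_le_card _) ?_
    rw [Set.toFinset_card]
    simpa using Fintype.card_range_le u
  have hliq : LinearIndependent ℚ u := by
    rw [linearIndependent_iff_card_eq_finrank_span]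
    show Fintype.card (Fin n) = Module.finrank ℚ (Submodule.span ℚ (Set.range u))
    rw [Fintype.card_fin, ← hV]
    exact (le_antisymm hub h2).symm
  refine hliq.restrict_scalars ?_
  intro a b hab
  have h4 : ((a:ℤ):ℚ) = ((b:ℤ):ℚ) := by simpa [zsmul_eq_mul] using hab
  exact_mod_cast h4


/-- The intertwiner module `Λ(A,B) = {X ∈ M_n(ℤ) : AX = XB}`. -/
def Lambda {n : ℕ} (A B : Matrix (Fin n) (Fin n) ℤ) :
    Submodule ℤ (Matrix (Fin n) (Fin n) ℤ) where
  carrier := {X | A * X = X * B}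
  add_mem' := by
    intro X Y hX hY
    simp only [Set.mem_setOf_eq] at *
    rw [mul_add, add_mul, hX, hY]
  zero_mem' := by simp
  smul_mem' := by
    intro c X hX
    simp only [Set.mem_setOf_eq] at *
    rw [mul_smul_comm, smul_mul_assoc, hX]

/-- Let `A, B ∈ GL_n(ℤ)` have the same irreducible characteristic polynomial `f`, with
right eigenvectors `u` of `A` and `v` of `B` for a common root `β` of `f` in `K`.
Then the map `φ : Λ(A,B) → (J : I)` sending `X` to the `θ ∈ K` with `X v = θ u` is an
isomorphism of abelian groups, where `I` and `J` are the fractional ideals generated over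
`ℤ` by the entries of `u` and `v` respectively. -/
theorem stmt8 {K : Type*} [Field K] [CharZero K] {n : ℕ} (hn : 0 < n)
    (A B : Matrix (Fin n) (Fin n) ℤ) (hA : IsUnit A.det) (hB : IsUnit B.det)
    (hirr : Irreducible (Polynomial.map (Int.castRingHom ℚ) A.charpoly))
    (hcp : B.charpoly = A.charpoly)
    (β : K) (hβ : Polynomial.aeval β A.charpoly = 0)
    (u v : Fin n → K) (hu0 : u ≠ 0) (hv0 : v ≠ 0)
    (hu : Matrix.mulVec (A.map (algebraMap ℤ K)) u = β • u)
    (hv : Matrix.mulVec (B.map (algebraMap ℤ K)) v = β • v) :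
    ∃ e : Lambda A B ≃+
        colonSub (Submodule.span ℤ (Set.range v)) (Submodule.span ℤ (Set.range u)),
      ∀ X : Lambda A B,
        Matrix.mulVec ((X : Matrix (Fin n) (Fin n) ℤ).map (algebraMap ℤ K)) v
          = (e X : K) • u := by
  classical
  obtain ⟨i0, hi0⟩ : ∃ i, u i ≠ 0 := by
    by_contra h
    push_neg at h
    exact hu0 (funext h)
  have hirrB : Irreducible (Polynomial.map (Int.castRingHom ℚ) B.charpoly) := by
    rw [hcp]; exact hirr
  have hβB : Polynomial.aeval β B.charpoly = 0 := by rw [hcp]; exact hβ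
  have hliv : LinearIndependent ℤ v := entries_li hn B hirrB β hβB v hv0 hv
  have hlivf := Fintype.linearIndependent_iff.mp hliv
  have hentry : ∀ (M : Matrix (Fin n) (Fin n) ℤ) (i : Fin n),
      ((M.map (algebraMap ℤ K)) *ᵥ v) i = ∑ j, M i j • v j := by
    intro M i
    simp only [Matrix.mulVec, dotProduct, Matrix.map_apply]
    refine Finset.sum_congr rfl fun j _ => ?_
    rw [zsmul_eq_mul]
    norm_num
  have hrow : ∀ M : Matrix (Fin n) (Fin n) ℤ, (M.map (algebraMap ℤ K)) *ᵥ v = 0 → M = 0 := by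
    intro M hM
    ext i j
    have h1 := congrFun hM i
    rw [hentry M i] at h1
    simpa using hlivf _ h1 j
  have uniq : ∀ {θ θ' : K}, θ • u = θ' • u → θ = θ' := by
    intro θ θ' h
    have h1 := congrFun h i0
    simp only [Pi.smul_apply, smul_eq_mul] at h1
    exact mul_right_cancel₀ hi0 h1
  have eig : ∀ X : Lambda A B,
      (A.map (algebraMap ℤ K)) *ᵥ (((X : Matrix (Fin n) (Fin n) ℤ).map (algebraMap ℤ K)) *ᵥ v)
        = β • (((X : Matrix (Fin n) (Fin n) ℤ).map (algebraMap ℤ K)) *ᵥ v) := by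
    intro X
    have hX : A * (X : Matrix (Fin n) (Fin n) ℤ) = (X : Matrix (Fin n) (Fin n) ℤ) * B := X.2
    rw [Matrix.mulVec_mulVec, ← Matrix.map_mul, hX, Matrix.map_mul, ← Matrix.mulVec_mulVec, hv,
      Matrix.mulVec_smul]
  have hF : ∀ X : Lambda A B, ∃ θ : K,
      ((X : Matrix (Fin n) (Fin n) ℤ).map (algebraMap ℤ K)) *ᵥ v = θ • u :=
    fun X => eigen_scalar hn A hirr β hβ u _ hu0 hu (eig X)
  choose F hFs using hF
  have hmem : ∀ X : Lambda A B,
      F X ∈ colonSub (Submodule.span ℤ (Set.range v)) (Submodule.span ℤ (Set.range u)) := by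
    intro X y hy
    induction hy using Submodule.span_induction with
    | mem z hz =>
      obtain ⟨i, rfl⟩ := hz
      have h5 := congrFun (hFs X) i
      simp only [Pi.smul_apply, smul_eq_mul] at h5
      rw [← h5, hentry]
      exact Submodule.sum_mem _ fun j _ =>
        Submodule.smul_mem _ _ (Submodule.subset_span (Set.mem_range_self j))
    | zero => simp
    | add a b _ _ ha hb => rw [mul_add]; exact Submodule.add_mem _ ha hb
    | smul c a _ ha => rw [mul_smul_comm]; exact Submodule.smul_mem _ _ ha
  let φ : Lambda A B →+
      colonSub (Submodule.span ℤ (Set.range v)) (Submodule.span ℤ (Set.range u)) :=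
    { toFun := fun X => ⟨F X, hmem X⟩
      map_zero' := by
        apply Subtype.ext
        show F 0 = 0
        apply uniq
        rw [← hFs 0]
        simp
      map_add' := by
        intro X Y
        apply Subtype.ext
        show F (X + Y) = F X + F Y
        apply uniq
        rw [← hFs (X + Y), add_smul, ← hFs X, ← hFs Y,
          show ((X + Y : Lambda A B) : Matrix (Fin n) (Fin n) ℤ)
            = (X : Matrix (Fin n) (Fin n) ℤ) + (Y : Matrix (Fin n) (Fin n) ℤ) from rfl,
          Matrix.map_add _ (fun a b => map_add (algebraMap ℤ K) a b), Matrix.add_mulVec] }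
  have hinj : Function.Injective φ := by
    rw [injective_iff_map_eq_zero]
    intro X hX0
    have hF0 : F X = 0 := congrArg Subtype.val hX0
    have h6 : ((X : Matrix (Fin n) (Fin n) ℤ).map (algebraMap ℤ K)) *ᵥ v = 0 := by
      rw [hFs X, hF0, zero_smul]
    exact Subtype.ext (hrow _ h6)
  have hsurj : Function.Surjective φ := by
    rintro ⟨θ, hθ⟩
    have hθu : ∀ i, θ * u i ∈ Submodule.span ℤ (Set.range v) :=
      fun i => hθ (u i) (Submodule.subset_span (Set.mem_range_self i))
    choose c hc using fun i => (mem_span_range_iff_exists_fun ℤ).mp (hθu i)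
    set X : Matrix (Fin n) (Fin n) ℤ := Matrix.of c with hXdef
    have hXv : (X.map (algebraMap ℤ K)) *ᵥ v = θ • u := by
      funext i
      rw [hentry X i]
      have : ∀ j, X i j = c i j := fun j => rfl
      simp only [this]
      rw [hc i]
      simp
    have hXmem : X ∈ Lambda A B := by
      show A * X = X * B
      have h0 : ((A * X - X * B).map (algebraMap ℤ K)) *ᵥ v = 0 := by
        rw [Matrix.map_sub _ (fun a b => map_sub (algebraMap ℤ K) a b), Matrix.sub_mulVec,
          Matrix.map_mul, Matrix.map_mul, ← Matrix.mulVec_mulVec, ← Matrix.mulVec_mulVec, hXv,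
          hv, Matrix.mulVec_smul, hu, Matrix.mulVec_smul, hXv, smul_smul, smul_smul,
          mul_comm, sub_self]
      exact sub_eq_zero.mp (hrow _ h0)
    refine ⟨⟨X, hXmem⟩, ?_⟩
    apply Subtype.ext
    show F ⟨X, hXmem⟩ = θ
    apply uniq
    rw [← hFs ⟨X, hXmem⟩]
    exact hXv
  exact ⟨AddEquiv.ofBijective φ ⟨hinj, hsurj⟩, fun X => hFs X⟩
end

section
/- Suppose M ∈ GL_{nk}(Z) satisfies (⊕_{i=1}^k B)M = M(⊕_{i=1}^k A_i) where B, A_1, ..., A_k ∈ GL_n(Z) all have the same irreducible characteristic polynomial, A = A_1, I and J the ideals associated to A and B. Then (I:I) = (J:J). -/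
section myHelpers

open Matrix Polynomial

variable {K : Type*} [Field K] {n : ℕ}

/-- If two kernel vectors of `P` are "independent", then the adjugate of `P` vanishes. -/
lemma adj_eq_zero_of_indep' (P : Matrix (Fin n) (Fin n) K) {x y : Fin n → K}
    (hx : P *ᵥ x = 0) (hy : P *ᵥ y = 0)
    (hind : ∀ a b : K, a • x + b • y = 0 → a = 0 ∧ b = 0) :
    P.adjugate = 0 := by
  classical
  have hx0 : x ≠ 0 := by
    intro h
    have := (hind 1 0 (by simp [h])).1
    exact one_ne_zero this
  ext i j
  rw [Matrix.adjugate_apply, Matrix.zero_apply]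
  have key : ∀ z : Fin n → K, z ≠ 0 → P *ᵥ z = 0 → z i = 0 →
      (P.updateRow j (Pi.single i 1)).det = 0 := by
    intro z hz0 hPz hzi
    rw [← Matrix.exists_mulVec_eq_zero_iff]
    refine ⟨z, hz0, ?_⟩
    funext r
    by_cases hr : r = j
    · subst hr
      show (P.updateRow r (Pi.single i 1)) r ⬝ᵥ z = 0
      rw [Matrix.updateRow_self, single_dotProduct, one_mul, hzi]
    · show (P.updateRow j (Pi.single i 1)) r ⬝ᵥ z = 0
      rw [Matrix.updateRow_ne hr]
      have := congrFun hPz r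
      simpa [Matrix.mulVec] using this
  by_cases hxi : x i = 0
  · exact key x hx0 hx hxi
  · set z : Fin n → K := x i • y - y i • x with hzdef
    have hz0 : z ≠ 0 := by
      intro h
      have : (-(y i)) • x + (x i) • y = 0 := by
        rw [← h]; funext a; simp [hzdef]; ring
      exact hxi (hind _ _ this).2
    have hPz : P *ᵥ z = 0 := by
      rw [hzdef, Matrix.mulVec_sub, Matrix.mulVec_smul, Matrix.mulVec_smul, hx, hy]
      simp
    have hzi : z i = 0 := by simp [hzdef]; ring
    exact key z hz0 hPz hzi

lemma adj_ne_zero' [CharZero K] {C : Matrix (Fin n) (Fin n) ℤ}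
    (hirr : Irreducible (C.charpoly.map (Int.castRingHom ℚ)))
    {β : K} (hβ : aeval β C.charpoly = 0) :
    Matrix.adjugate (β • (1 : Matrix (Fin n) (Fin n) K) - C.map (algebraMap ℤ K)) ≠ 0 := by
  classical
  set p : ℚ[X] := C.charpoly.map (Int.castRingHom ℚ) with hp
  set Cq : Matrix (Fin n) (Fin n) ℚ := C.map (Int.castRingHom ℚ) with hCq
  have hdet : (charmatrix Cq).det = p := by
    rw [show (charmatrix Cq).det = Cq.charpoly from rfl, hCq, Matrix.charpoly_map]
  set D : Matrix (Fin n) (Fin n) ℚ[X] := (charmatrix Cq).adjugate with hD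
  -- step 1 : p does not divide all entries of D
  have step1 : ∃ i j, ¬ p ∣ D i j := by
    by_contra hall
    push_neg at hall
    choose E hE using fun i j => hall i j
    have hDE : D = p • Matrix.of E := by
      ext i j : 1; simpa [Matrix.smul_apply, smul_eq_mul] using hE i j
    have hmul : charmatrix Cq * D = p • 1 := by
      rw [Matrix.mul_adjugate, hdet]
    rw [hDE, Matrix.mul_smul] at hmul
    have hp0 : p ≠ 0 := hirr.ne_zero
    have hunit : charmatrix Cq * Matrix.of E = 1 := by
      ext i j : 1
      have := congrFun (congrFun hmul i) j
      simp only [Matrix.smul_apply, smul_eq_mul] at this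
      exact mul_left_cancel₀ hp0 this
    have : IsUnit p := by
      rw [← hdet]
      have := congrArg Matrix.det hunit
      rw [Matrix.det_mul, Matrix.det_one] at this
      exact isUnit_iff_exists_inv.mpr ⟨_, this⟩
    exact hirr.not_isUnit this
  obtain ⟨i, j, hnd⟩ := step1
  have hcop : IsCoprime p (D i j) := hirr.coprime_iff_not_dvd.mpr hnd
  obtain ⟨a, b, hab⟩ := hcop
  set φ : ℚ[X] →+* K := (aeval β : ℚ[X] →ₐ[ℚ] K).toRingHom with hφ
  have hφp : φ p = 0 := by
    show aeval β p = 0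
    rw [hp, aeval_def, eval₂_map]
    have : (algebraMap ℚ K).comp (Int.castRingHom ℚ) = algebraMap ℤ K :=
      RingHom.ext_int _ _
    rw [this, ← aeval_def, hβ]
  have hφq : φ (D i j) ≠ 0 := by
    intro h0
    have := congrArg φ hab
    rw [map_add, _root_.map_mul, _root_.map_mul, hφp, h0, mul_zero, mul_zero, add_zero, _root_.map_one] at this
    exact zero_ne_one this
  -- step 2 : relate the adjugates
  have hmap : (charmatrix Cq).map φ =
      β • (1 : Matrix (Fin n) (Fin n) K) - C.map (algebraMap ℤ K) := by
    ext r s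
    by_cases hrs : r = s
    · subst hrs
      simp only [Matrix.map_apply, charmatrix_apply_eq, Matrix.sub_apply, Matrix.smul_apply,
        Matrix.one_apply_eq, smul_eq_mul, mul_one, map_sub]
      have h1 : φ (X : ℚ[X]) = β := by show aeval β (X : ℚ[X]) = β; simp
      have h2 : φ (Polynomial.C (Cq r r)) = algebraMap ℤ K (C r r) := by
        show aeval β (Polynomial.C (Cq r r)) = _
        simp [hCq, Matrix.map_apply]
      rw [h1, h2]
    · simp only [Matrix.map_apply, charmatrix_apply_ne _ _ _ hrs, Matrix.sub_apply,
        Matrix.smul_apply, Matrix.one_apply_ne hrs, smul_eq_mul, mul_zero, map_neg, zero_sub,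
        neg_inj]
      show aeval β (Polynomial.C (Cq r s)) = _
      simp [hCq, Matrix.map_apply]
  have hadj : (β • (1 : Matrix (Fin n) (Fin n) K) - C.map (algebraMap ℤ K)).adjugate
      = D.map φ := by
    rw [← hmap, hD]
    have := (φ.map_adjugate (charmatrix Cq)).symm
    simpa [RingHom.mapMatrix_apply] using this
  intro h0
  rw [hadj] at h0
  have := congrFun (congrFun h0 i) j
  simp only [Matrix.map_apply, Matrix.zero_apply] at this
  exact hφq this

lemma eig_unique' [CharZero K] {C : Matrix (Fin n) (Fin n) ℤ}
    (hirr : Irreducible (C.charpoly.map (Int.castRingHom ℚ)))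
    {β : K} (hβ : aeval β C.charpoly = 0) {x y : Fin n → K} (hy0 : y ≠ 0)
    (hx : (C.map (algebraMap ℤ K)) *ᵥ x = β • x)
    (hy : (C.map (algebraMap ℤ K)) *ᵥ y = β • y) :
    ∃ c : K, x = c • y := by
  set P : Matrix (Fin n) (Fin n) K := β • 1 - C.map (algebraMap ℤ K) with hP
  have hPx : P *ᵥ x = 0 := by
    rw [hP, Matrix.sub_mulVec, Matrix.smul_mulVec, Matrix.one_mulVec, hx, sub_self]
  have hPy : P *ᵥ y = 0 := by
    rw [hP, Matrix.sub_mulVec, Matrix.smul_mulVec, Matrix.one_mulVec, hy, sub_self]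
  by_contra hc
  push_neg at hc
  refine adj_ne_zero' hirr hβ (adj_eq_zero_of_indep' P hPx hPy ?_)
  intro a b hab
  by_cases ha : a = 0
  · subst ha
    refine ⟨rfl, ?_⟩
    rw [zero_smul, zero_add] at hab
    rcases smul_eq_zero.mp hab with h | h
    · exact h
    · exact absurd h hy0
  · exfalso
    apply hc (-b / a)
    funext r
    have := congrFun hab r
    simp only [Pi.add_apply, Pi.smul_apply, smul_eq_mul, Pi.zero_apply] at this
    rw [Pi.smul_apply, smul_eq_mul, div_mul_eq_mul_div, eq_div_iff ha]
    linear_combination this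

lemma mulVec_entries_mem' {m' l' : Type*} [Fintype l'] (T : Matrix m' l' ℤ) (x : l' → K)
    (S : Submodule ℤ K) (hx : ∀ i, x i ∈ S) (i : m') :
    ((T.map (algebraMap ℤ K)) *ᵥ x) i ∈ S := by
  simp only [Matrix.mulVec, dotProduct, Matrix.map_apply]
  refine Submodule.sum_mem _ fun j _ => ?_
  have : (algebraMap ℤ K) (T i j) * x j = (T i j) • x j := by
    rw [algebraMap_int_eq, eq_intCast, ← zsmul_eq_mul]
  rw [this]
  exact S.smul_mem _ (hx j)

lemma mul_span_subset' {c : K} {T : Submodule ℤ K} {gen : Set K}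
    (h : ∀ g ∈ gen, c * g ∈ T) : ∀ y ∈ Submodule.span ℤ gen, c * y ∈ T := by
  intro y hy
  induction hy using Submodule.span_induction with
  | mem g hg => exact h g hg
  | zero => simpa using T.zero_mem
  | add y z _ _ hy hz => rw [mul_add]; exact T.add_mem hy hz
  | smul a y _ hy => rw [mul_smul_comm]; exact T.smul_mem a hy

lemma blockDiagonal_mulVec' {k : ℕ} (Cs : Fin k → Matrix (Fin n) (Fin n) K)
    (x : Fin n × Fin k → K) (a : Fin n) (i : Fin k) :
    (Matrix.blockDiagonal Cs *ᵥ x) (a, i) = (Cs i *ᵥ fun b => x (b, i)) a := by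
  classical
  simp only [Matrix.mulVec, dotProduct]
  rw [Fintype.sum_prod_type]
  simp only [Matrix.blockDiagonal_apply, ite_mul, zero_mul]
  simp [Finset.sum_ite_eq]

end myHelpers


open Matrix Polynomial

/-- Suppose `M ∈ GL_{nk}(ℤ)` satisfies `(⊕ᵢ B) M = M (⊕ᵢ Aᵢ)`, where `B, A₁, …, A_k` all
lie in `GL_n(ℤ)` with the same irreducible characteristic polynomial and `A = A₁`.
Then the coefficient rings of the ideals `I` and `J` associated to `A` and `B` coincide:
`(I : I) = (J : J)`. -/
theorem stmt11 {K : Type*} [Field K] [CharZero K] {n k : ℕ} (hn : 0 < n) (hk : 0 < k)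
    (B : Matrix (Fin n) (Fin n) ℤ) (A : Fin k → Matrix (Fin n) (Fin n) ℤ)
    (hB : IsUnit B.det) (hA : ∀ i, IsUnit (A i).det)
    (hirr : Irreducible (Polynomial.map (Int.castRingHom ℚ) B.charpoly))
    (hcp : ∀ i, (A i).charpoly = B.charpoly)
    (β : K) (hβ : Polynomial.aeval β B.charpoly = 0)
    (u v : Fin n → K) (hu0 : u ≠ 0) (hv0 : v ≠ 0)
    (hu : Matrix.mulVec ((A ⟨0, hk⟩).map (algebraMap ℤ K)) u = β • u)
    (hv : Matrix.mulVec (B.map (algebraMap ℤ K)) v = β • v)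
    (M : Matrix (Fin n × Fin k) (Fin n × Fin k) ℤ) (hM : IsUnit M.det)
    (hconj : Matrix.blockDiagonal (fun _ : Fin k => B) * M = M * Matrix.blockDiagonal A) :
    colonSub (Submodule.span ℤ (Set.range u)) (Submodule.span ℤ (Set.range u))
      = colonSub (Submodule.span ℤ (Set.range v)) (Submodule.span ℤ (Set.range v)) := by
  classical
  set ι : ℤ →+* K := algebraMap ℤ K with hι
  set I : Submodule ℤ K := Submodule.span ℤ (Set.range u) with hI
  set J : Submodule ℤ K := Submodule.span ℤ (Set.range v) with hJ
  set j0 : Fin k := ⟨0, hk⟩ with hj0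
  letI : Invertible M := M.invertibleOfIsUnitDet hM
  set N : Matrix (Fin n × Fin k) (Fin n × Fin k) ℤ := ⅟M with hN
  have hNM : N * M = 1 := invOf_mul_self M
  have hMN : M * N = 1 := mul_invOf_self M
  set BB := Matrix.blockDiagonal (fun _ : Fin k => B) with hBB
  set AA := Matrix.blockDiagonal A with hAA
  have hconj' : N * BB = AA * N := by
    have h : N * BB * M = AA := by
      rw [Matrix.mul_assoc, hconj, ← Matrix.mul_assoc, hNM, Matrix.one_mul]
    calc N * BB = N * BB * (M * N) := by rw [hMN, Matrix.mul_one]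
      _ = (N * BB * M) * N := by simp only [Matrix.mul_assoc]
      _ = AA * N := by rw [h]
  set Mk := M.map ι with hMk
  set Nk := N.map ι with hNk
  set BBk := Matrix.blockDiagonal (fun _ : Fin k => B.map ι) with hBBk
  set AAk := Matrix.blockDiagonal (fun i => (A i).map ι) with hAAk
  have hmapBB : BB.map ι = BBk := by
    rw [hBB, hBBk]
    ext ⟨a, i⟩ ⟨b, j⟩ : 1
    by_cases hij : i = j <;>
      simp [Matrix.map_apply, Matrix.blockDiagonal_apply, hij]
  have hmapAA : AA.map ι = AAk := by
    rw [hAA, hAAk]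
    ext ⟨a, i⟩ ⟨b, j⟩ : 1
    by_cases hij : i = j <;>
      simp [Matrix.map_apply, Matrix.blockDiagonal_apply, hij]
  have hconjK : BBk * Mk = Mk * AAk := by
    rw [← hmapBB, ← hmapAA, hMk, ← Matrix.map_mul, ← Matrix.map_mul, hconj]
  have hconjK' : Nk * BBk = AAk * Nk := by
    rw [← hmapBB, ← hmapAA, hNk, ← Matrix.map_mul, ← Matrix.map_mul, hconj']
  have hNMk : Nk * Mk = 1 := by
    rw [hNk, hMk, ← Matrix.map_mul, hNM, Matrix.map_one ι (map_zero ι) (map_one ι)]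
  set E : Fin k → (Fin n → K) → (Fin n × Fin k → K) :=
    fun j x p => if p.2 = j then x p.1 else 0 with hE
  have hEeig : ∀ (Cs : Fin k → Matrix (Fin n) (Fin n) ℤ) (j : Fin k) (x : Fin n → K),
      ((Cs j).map ι) *ᵥ x = β • x →
      (Matrix.blockDiagonal fun i => (Cs i).map ι) *ᵥ (E j x) = β • (E j x) := by
    intro Cs j x hx
    funext ⟨a, i⟩
    rw [show ((Matrix.blockDiagonal fun i => (Cs i).map ι) *ᵥ E j x) (a, i)
        = ((Cs i).map ι *ᵥ fun b => E j x (b, i)) a from blockDiagonal_mulVec' _ _ a i]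
    by_cases hij : i = j
    · subst hij
      have h1 : (fun b => E i x (b, i)) = x := by funext b; simp [hE]
      rw [h1, hx]
      simp [hE]
    · have h1 : (fun b => E j x (b, i)) = 0 := by funext b; simp [hE, hij]
      rw [h1, Matrix.mulVec_zero]
      simp [hE, hij]
  have hweig : AAk *ᵥ E j0 u = β • E j0 u := by
    rw [hAAk]
    exact hEeig A j0 u hu
  set z := Mk *ᵥ E j0 u with hz
  have hzeig : BBk *ᵥ z = β • z := by
    rw [hz, Matrix.mulVec_mulVec, hconjK, ← Matrix.mulVec_mulVec, hweig, Matrix.mulVec_smul]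
  have hzblock : ∀ jj : Fin k,
      (B.map ι) *ᵥ (fun a => z (a, jj)) = β • fun a => z (a, jj) := by
    intro jj
    funext a
    calc (B.map ι *ᵥ fun b => z (b, jj)) a
        = (BBk *ᵥ z) (a, jj) := by
          rw [hBBk]; exact (blockDiagonal_mulVec' (fun _ : Fin k => B.map ι) z a jj).symm
      _ = (β • z) (a, jj) := congrFun hzeig (a, jj)
      _ = (β • fun b => z (b, jj)) a := rfl
  choose c hc using fun jj : Fin k => eig_unique' hirr hβ hv0 (hzblock jj) hv
  set y : Fin k → (Fin n × Fin k → K) := fun jj => Nk *ᵥ E jj v with hy'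
  have hyeig : ∀ jj, AAk *ᵥ y jj = β • y jj := by
    intro jj
    have hEv : BBk *ᵥ E jj v = β • E jj v := by
      rw [hBBk]; exact hEeig (fun _ => B) jj v hv
    rw [hy']
    rw [Matrix.mulVec_mulVec, ← hconjK', ← Matrix.mulVec_mulVec, hEv, Matrix.mulVec_smul]
  have hyblock : ∀ jj : Fin k,
      ((A j0).map ι) *ᵥ (fun a => y jj (a, j0)) = β • fun a => y jj (a, j0) := by
    intro jj
    funext a
    calc ((A j0).map ι *ᵥ fun b => y jj (b, j0)) a
        = (AAk *ᵥ y jj) (a, j0) := by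
          rw [hAAk]; exact (blockDiagonal_mulVec' (fun i => (A i).map ι) (y jj) a j0).symm
      _ = (β • y jj) (a, j0) := congrFun (hyeig jj) (a, j0)
      _ = (β • fun b => y jj (b, j0)) a := rfl
  have hAirr : Irreducible ((A j0).charpoly.map (Int.castRingHom ℚ)) := by
    rw [hcp]; exact hirr
  have hAβ : aeval β (A j0).charpoly = 0 := by rw [hcp]; exact hβ
  choose d hd using fun jj : Fin k => eig_unique' hAirr hAβ hu0 (hyblock jj) hu
  -- memberships
  have hEuI : ∀ q : Fin n × Fin k, E j0 u q ∈ I := by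
    intro q
    show (if q.2 = j0 then u q.1 else 0) ∈ I
    split
    · exact Submodule.subset_span ⟨q.1, rfl⟩
    · exact I.zero_mem
  have hEvJ : ∀ jj (q : Fin n × Fin k), E jj v q ∈ J := by
    intro jj q
    show (if q.2 = jj then v q.1 else 0) ∈ J
    split
    · exact Submodule.subset_span ⟨q.1, rfl⟩
    · exact J.zero_mem
  have hzI : ∀ q, z q ∈ I := fun q => by
    rw [hz, hMk]; exact mulVec_entries_mem' M (E j0 u) I hEuI q
  have hyJ : ∀ jj q, y jj q ∈ J := fun jj q => by
    rw [hy', hNk]; exact mulVec_entries_mem' N (E jj v) J (hEvJ jj) q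
  have hcJ : ∀ jj a, c jj * v a ∈ I := by
    intro jj a
    have h1 : z (a, jj) = c jj * v a := by
      simpa [smul_eq_mul] using congrFun (hc jj) a
    rw [← h1]
    exact hzI (a, jj)
  have hdI : ∀ jj a, d jj * u a ∈ J := by
    intro jj a
    have h1 : y jj (a, j0) = d jj * u a := by
      simpa [smul_eq_mul] using congrFun (hd jj) a
    rw [← h1]
    exact hyJ jj (a, j0)
  have hcmul : ∀ jj, ∀ t ∈ J, c jj * t ∈ I := by
    intro jj
    rw [hJ]
    exact mul_span_subset' (by rintro g ⟨a, rfl⟩; exact hcJ jj a)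
  have hdmul : ∀ jj, ∀ t ∈ I, d jj * t ∈ J := by
    intro jj
    rw [hI]
    exact mul_span_subset' (by rintro g ⟨a, rfl⟩; exact hdI jj a)
  -- the sum identity
  have hzdecomp : z = ∑ jj, c jj • E jj v := by
    funext ⟨a, i⟩
    have h1 : z (a, i) = c i * v a := by
      simpa [smul_eq_mul] using congrFun (hc i) a
    rw [h1, Finset.sum_apply]
    simp only [Pi.smul_apply, hE, smul_eq_mul, mul_ite, mul_zero]
    simp
  have hweq : E j0 u = ∑ jj, c jj • y jj := by
    have h1 : E j0 u = Nk *ᵥ z := by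
      rw [hz, Matrix.mulVec_mulVec, hNMk, Matrix.one_mulVec]
    rw [h1, hzdecomp]
    calc Nk *ᵥ (∑ jj, c jj • E jj v)
        = Nk.mulVecLin (∑ jj, c jj • E jj v) := (Matrix.mulVecLin_apply _ _).symm
      _ = ∑ jj, c jj • Nk.mulVecLin (E jj v) := by
          rw [map_sum]
          exact Finset.sum_congr rfl fun jj _ => LinearMap.map_smul _ _ _
      _ = ∑ jj, c jj • y jj := by
          refine Finset.sum_congr rfl fun jj _ => ?_
          rw [Matrix.mulVecLin_apply, hy']
  obtain ⟨a0, ha0⟩ : ∃ a, u a ≠ 0 := by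
    by_contra h; push_neg at h; exact hu0 (funext fun a => h a)
  have hsum : (∑ jj, c jj * d jj) = 1 := by
    have h1 := congrFun hweq (a0, j0)
    have hL : E j0 u (a0, j0) = u a0 := by simp [hE]
    have hR : (∑ jj, c jj • y jj) (a0, j0) = (∑ jj, c jj * d jj) * u a0 := by
      rw [Finset.sum_apply, Finset.sum_mul]
      refine Finset.sum_congr rfl fun jj _ => ?_
      have h2 : y jj (a0, j0) = d jj * u a0 := by
        simpa [smul_eq_mul] using congrFun (hd jj) a0
      simp only [Pi.smul_apply, smul_eq_mul, h2]
      ring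
    rw [hL, hR] at h1
    have h3 : (∑ jj, c jj * d jj) * u a0 = 1 * u a0 := by rw [one_mul, ← h1]
    exact mul_right_cancel₀ ha0 h3
  -- conclusion
  ext x
  show (∀ t ∈ I, x * t ∈ I) ↔ (∀ t ∈ J, x * t ∈ J)
  constructor
  · intro hx t ht
    have key : ∑ jj, d jj * (x * (c jj * t)) = x * t := by
      have h : ∀ jj : Fin k, d jj * (x * (c jj * t)) = (c jj * d jj) * (x * t) :=
        fun jj => by ring
      rw [Finset.sum_congr rfl fun jj _ => h jj, ← Finset.sum_mul, hsum, one_mul]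
    rw [← key]
    exact Submodule.sum_mem _ fun jj _ => hdmul jj _ (hx _ (hcmul jj t ht))
  · intro hx t ht
    have key : ∑ jj, c jj * (x * (d jj * t)) = x * t := by
      have h : ∀ jj : Fin k, c jj * (x * (d jj * t)) = (c jj * d jj) * (x * t) :=
        fun jj => by ring
      rw [Finset.sum_congr rfl fun jj _ => h jj, ← Finset.sum_mul, hsum, one_mul]
    rw [← key]
    exact Submodule.sum_mem _ fun jj _ => hcmul jj _ (hx _ (hdmul jj t ht))
end

section
/- If A and B in GL_n(Z) with the same irreducible characteristic polynomial are k-block conjugate for some k ≥ 1, then they are (k+1)-block conjugate. -/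
open Matrix

/-- Conjugacy of integer matrices by a matrix in `GL(ℤ)`. -/
def ConjZ {m : Type*} [Fintype m] [DecidableEq m] (X Y : Matrix m m ℤ) : Prop :=
  ∃ M : Matrix m m ℤ, IsUnit M.det ∧ X * M = M * Y

/-- `A` and `B` in `GL_n(ℤ)` are `k`-block conjugate if there exist
`A₂, …, A_k, B₂, …, B_k ∈ GL_n(ℤ)` such that `⊕ᵢ₌₁ᵏ A ≈ ⊕ᵢ₌₁ᵏ Bᵢ` (with `B₁ = B`) and
`⊕ᵢ₌₁ᵏ B ≈ ⊕ᵢ₌₁ᵏ Aᵢ` (with `A₁ = A`). -/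
def kBlockConj (n k : ℕ) (A B : Matrix (Fin n) (Fin n) ℤ) : Prop :=
  ∃ Ai Bi : Fin k → Matrix (Fin n) (Fin n) ℤ,
    (∀ i, IsUnit (Ai i).det) ∧ (∀ i, IsUnit (Bi i).det) ∧
    (∀ h : 0 < k, Ai ⟨0, h⟩ = A ∧ Bi ⟨0, h⟩ = B) ∧
    ConjZ (Matrix.blockDiagonal fun _ : Fin k => A) (Matrix.blockDiagonal Bi) ∧
    ConjZ (Matrix.blockDiagonal fun _ : Fin k => B) (Matrix.blockDiagonal Ai)

/-- Conjugacy is preserved by reindexing along an equivalence. -/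
lemma ConjZ.submatrix_equiv {m m' : Type*} [Fintype m] [DecidableEq m]
    [Fintype m'] [DecidableEq m'] {X Y : Matrix m m ℤ} (e : m' ≃ m)
    (h : ConjZ X Y) : ConjZ (X.submatrix e e) (Y.submatrix e e) := by
  obtain ⟨M, hd, hm⟩ := h
  refine ⟨M.submatrix e e, ?_, ?_⟩
  · rwa [Matrix.det_submatrix_equiv_self]
  · rw [Matrix.submatrix_mul_equiv, Matrix.submatrix_mul_equiv, hm]

/-- Conjugacy is preserved by direct sum with a fixed block. -/
lemma ConjZ.fromBlocks_diag {m l : Type*} [Fintype m] [DecidableEq m]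
    [Fintype l] [DecidableEq l] {X Y : Matrix m m ℤ} (C : Matrix l l ℤ)
    (h : ConjZ X Y) :
    ConjZ (Matrix.fromBlocks X 0 0 C) (Matrix.fromBlocks Y 0 0 C) := by
  obtain ⟨M, hd, hm⟩ := h
  refine ⟨Matrix.fromBlocks M 0 0 1, ?_, ?_⟩
  · rw [Matrix.det_fromBlocks_zero₂₁]
    simpa using hd
  · rw [Matrix.fromBlocks_multiply, Matrix.fromBlocks_multiply]
    simp [hm]

/-- Splitting the index set of a `(k+1)`-fold block diagonal. -/
def splitEquiv (n k : ℕ) : Fin n × Fin (k + 1) ≃ (Fin n × Fin k) ⊕ Fin n where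
  toFun p := if h : (p.2 : ℕ) < k then .inl (p.1, ⟨p.2, h⟩) else .inr p.1
  invFun x := x.elim (fun p => (p.1, p.2.castSucc)) (fun a => (a, Fin.last k))
  left_inv := by
    rintro ⟨a, i⟩
    by_cases h : (i : ℕ) < k
    · simp only [h, dif_pos]
      ext <;> simp [Fin.castSucc]
    · have hi : i = Fin.last k := by
        ext
        have := i.is_lt
        simp [Fin.last]; omega
      simp [h, hi]
  right_inv := by
    rintro (⟨a, i⟩ | a)
    · simp [i.is_lt, Fin.castSucc]
    · simp [Fin.last]

lemma blockDiagonal_succ_eq {n k : ℕ} (f : Fin (k + 1) → Matrix (Fin n) (Fin n) ℤ) :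
    Matrix.blockDiagonal f =
      (Matrix.fromBlocks (Matrix.blockDiagonal fun i : Fin k => f i.castSucc) 0 0
        (f (Fin.last k))).submatrix (splitEquiv n k) (splitEquiv n k) := by
  ext ⟨a, i⟩ ⟨b, j⟩
  simp only [Matrix.submatrix_apply, splitEquiv, Equiv.coe_fn_mk]
  by_cases hi : (i : ℕ) < k <;> by_cases hj : (j : ℕ) < k
  · have hcast : ∀ (m : Fin (k+1)) (hm : (m : ℕ) < k), (⟨(m : ℕ), hm⟩ : Fin k).castSucc = m := by
      intro m hm; ext; simp
    by_cases h : i = j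
    · subst h
      simp [hi, hj, Matrix.blockDiagonal_apply, hcast i hi]
    · have h2 : (⟨(i : ℕ), hi⟩ : Fin k) ≠ ⟨(j : ℕ), hj⟩ := by
        intro hc; apply h; ext; simpa [Fin.ext_iff] using hc
      simp [hi, hj, h, h2, Matrix.blockDiagonal_apply]
  · have : i ≠ j := by intro h; subst h; exact hj hi
    simp [hi, hj, this, Matrix.blockDiagonal_apply]
  · have : i ≠ j := by intro h; subst h; exact hi hj
    simp [hi, hj, this, Matrix.blockDiagonal_apply]
  · have hik : i = Fin.last k := by ext; have := i.is_lt; simp only [Fin.val_last]; omega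
    have hjk : j = Fin.last k := by ext; have := j.is_lt; simp only [Fin.val_last]; omega
    simp [hi, hj, hik, hjk, Matrix.blockDiagonal_apply]

/-- If `A` and `B` in `GL_n(ℤ)` with the same irreducible characteristic polynomial are
`k`-block conjugate for some `k ≥ 1`, then they are `(k+1)`-block conjugate. -/
theorem stmt14 {n k : ℕ} (hn : 0 < n) (hk : 1 ≤ k)
    (A B : Matrix (Fin n) (Fin n) ℤ) (hA : IsUnit A.det) (hB : IsUnit B.det)
    (hirr : Irreducible (Polynomial.map (Int.castRingHom ℚ) A.charpoly))
    (hcp : B.charpoly = A.charpoly)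
    (h : kBlockConj n k A B) : kBlockConj n (k + 1) A B := by
  obtain ⟨Ai, Bi, hAu, hBu, h0, hc1, hc2⟩ := h
  refine ⟨(fun i : Fin (k + 1) => if hik : (i : ℕ) < k then Ai ⟨i, hik⟩ else B),
          (fun i : Fin (k + 1) => if hik : (i : ℕ) < k then Bi ⟨i, hik⟩ else A),
          ?_, ?_, ?_, ?_, ?_⟩
  · intro i; by_cases hik : (i : ℕ) < k <;> simp [hik]
    exacts [hAu _, hB]
  · intro i; by_cases hik : (i : ℕ) < k <;> simp [hik]
    exacts [hBu _, hA]
  · intro _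
    have h0k : (0 : ℕ) < k := hk
    constructor <;> simp [h0k, (h0 h0k).1, (h0 h0k).2]
  · rw [blockDiagonal_succ_eq (fun _ => A),
        blockDiagonal_succ_eq (fun i : Fin (k+1) => if hik : (i : ℕ) < k then Bi ⟨i, hik⟩ else A)]
    apply ConjZ.submatrix_equiv
    have e1 : (fun i : Fin k =>
        (fun i : Fin (k+1) => if hik : (i : ℕ) < k then Bi ⟨i, hik⟩ else A) i.castSucc) = Bi := by
      funext i; simp [i.is_lt]
    have e2 : (fun i : Fin (k+1) => if hik : (i : ℕ) < k then Bi ⟨i, hik⟩ else A) (Fin.last k)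
        = A := by simp
    rw [e1]
    simp only [Fin.val_last, lt_irrefl, dite_false]
    exact ConjZ.fromBlocks_diag A hc1
  · rw [blockDiagonal_succ_eq (fun _ => B),
        blockDiagonal_succ_eq (fun i : Fin (k+1) => if hik : (i : ℕ) < k then Ai ⟨i, hik⟩ else B)]
    apply ConjZ.submatrix_equiv
    have e1 : (fun i : Fin k =>
        (fun i : Fin (k+1) => if hik : (i : ℕ) < k then Ai ⟨i, hik⟩ else B) i.castSucc) = Ai := by
      funext i; simp [i.is_lt]
    have e2 : (fun i : Fin (k+1) => if hik : (i : ℕ) < k then Ai ⟨i, hik⟩ else B) (Fin.last k)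
        = B := by simp
    rw [e1]
    simp only [Fin.val_last, lt_irrefl, dite_false]
    exact ConjZ.fromBlocks_diag B hc2
end

section
/- There exists a semiconjugacy from A to ⊕_{i=1}^k B by a linear embedding ι: T^n → T^{nk} (i.e., ι∘A = (⊕_{i=1}^k B)∘ι with ι injective linear) if and only if there exists M ∈ GL_{nk}(Z) and matrices S ∈ M_{n×n(k-1)}(Z), A' ∈ GL_{n(k-1)}(Z) such that (⊕_{i=1}^k B) M = M [[A, S],[0, A']]. -/
/-- An integer matrix `L` induces a linear embedding of tori (an injective linear map
`T^n → T^{nk}`) precisely when the only real vectors `x` with `Lx` integral are themselves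
integral. -/
def IsTorusEmbedding {ρ : Type*} [Fintype ρ] {n : ℕ} (L : Matrix ρ (Fin n) ℤ) : Prop :=
  ∀ x : Fin n → ℝ,
    (∀ j, ∃ m : ℤ, Matrix.mulVec (L.map (Int.cast : ℤ → ℝ)) x j = (m : ℝ)) →
    ∀ i, ∃ m : ℤ, x i = (m : ℝ)

open Matrix

lemma castVec_mulVec {ρ : Type*} [Fintype ρ] {n : ℕ} (L : Matrix ρ (Fin n) ℤ) (v : Fin n → ℤ) :
    (L.map (Int.cast : ℤ → ℝ)).mulVec (fun i => (v i : ℝ)) = fun j => ((L.mulVec v j : ℤ) : ℝ) := by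
  funext j; simp [Matrix.mulVec, dotProduct]

lemma exists_unimodular_extension {κ : Type*} [Fintype κ] [DecidableEq κ] {n : ℕ}
    (L : Matrix (Fin n ⊕ κ) (Fin n) ℤ) (hL : IsTorusEmbedding L) :
    ∃ M : Matrix (Fin n ⊕ κ) (Fin n ⊕ κ) ℤ, IsUnit M.det ∧ M.submatrix id Sum.inl = L := by
  classical
  set f : (Fin n → ℤ) →ₗ[ℤ] (Fin n ⊕ κ → ℤ) := L.mulVecLin with hf
  -- injectivity
  have hinj : Function.Injective f := by
    rw [injective_iff_map_eq_zero]
    intro v hv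
    have hx : ∀ i, ∃ m : ℤ, (Real.sqrt 2 * v i) = (m : ℝ) := by
      apply hL
      intro j
      refine ⟨0, ?_⟩
      have : (fun i => Real.sqrt 2 * (v i : ℝ)) = Real.sqrt 2 • (fun i => (v i : ℝ)) := by
        funext i; simp
      rw [this, Matrix.mulVec_smul, castVec_mulVec]
      have : L.mulVec v = 0 := hv
      simp [this]
    funext i
    obtain ⟨m, hm⟩ := hx i
    by_contra hvi
    have hvi' : (v i : ℝ) ≠ 0 := by
      simpa using fun h => hvi (by simpa using h)
    have h2 : Real.sqrt 2 = (m : ℝ) / (v i : ℝ) := by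
      field_simp [← hm]
      exact hm
    have : Irrational (Real.sqrt 2) := irrational_sqrt_two
    apply this.ne_rat ((m : ℚ) / (v i : ℚ))
    rw [h2]; push_cast; ring
  -- torsion-free quotient
  set Q := (Fin n ⊕ κ → ℤ) ⧸ LinearMap.range f with hQ
  haveI : NoZeroSMulDivisors ℤ Q := by
    refine ⟨fun {d} {q} hdq => ?_⟩
    by_cases hd : d = 0
    · exact Or.inl hd
    right
    obtain ⟨w, rfl⟩ := Submodule.mkQ_surjective _ q
    rw [← _root_.map_smul, Submodule.mkQ_apply, Submodule.Quotient.mk_eq_zero] at hdq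
    obtain ⟨v, hv⟩ := hdq
    have hx : ∀ i, ∃ m : ℤ, ((v i : ℝ) / (d : ℝ)) = (m : ℝ) := by
      apply hL
      intro j
      refine ⟨w j, ?_⟩
      have : (fun i => (v i : ℝ) / (d : ℝ)) = (d : ℝ)⁻¹ • (fun i => (v i : ℝ)) := by
        funext i; simp [div_eq_inv_mul]
      rw [this, Matrix.mulVec_smul, castVec_mulVec]
      have hv' : L.mulVec v = d • w := hv
      have hd' : (d : ℝ) ≠ 0 := Int.cast_ne_zero.mpr hd
      have he : ((L.mulVec v j : ℤ) : ℝ) = (d : ℝ) * (w j : ℝ) := by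
        rw [hv', Pi.smul_apply, smul_eq_mul]; push_cast; ring
      simp only [Pi.smul_apply, smul_eq_mul, he]
      field_simp
    choose m hm using hx
    have hvm : v = d • m := by
      funext i
      have := hm i
      have hd' : (d : ℝ) ≠ 0 := Int.cast_ne_zero.mpr hd
      have : (v i : ℝ) = (d : ℝ) * (m i : ℝ) := by
        field_simp at this ⊢; linarith [this]
      exact_mod_cast this
    have : f m = w := by
      have h1 : d • f m = d • w := by
        rw [← hv, hvm]; exact (f.map_smul d m).symm
      exact smul_right_injective (Fin n ⊕ κ → ℤ) hd h1
    rw [Submodule.mkQ_apply, Submodule.Quotient.mk_eq_zero]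
    exact ⟨m, this⟩
  haveI : Module.Finite ℤ Q := Module.Finite.quotient ℤ _
  haveI : Module.Free ℤ Q := Module.free_of_finite_type_torsion_free'
  -- splitting
  obtain ⟨s, hs⟩ := Module.projective_lifting_property (LinearMap.range f).mkQ LinearMap.id
    (Submodule.mkQ_surjective _)
  have hcompl : IsCompl (LinearMap.range f) (LinearMap.range s) := by
    constructor
    · rw [disjoint_iff_inf_le]
      rintro x ⟨hx1, q, rfl⟩
      have hq : q = 0 := by
        have h1 : (Submodule.Quotient.mk (s q) : (Fin n ⊕ κ → ℤ) ⧸ LinearMap.range f) = q := by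
          have := congrArg (fun g => g q) hs
          simpa using this
        rw [← h1, Submodule.Quotient.mk_eq_zero]
        exact hx1
      simp [hq]
    · rw [codisjoint_iff_le_sup]
      intro x _
      have hker : x - s ((LinearMap.range f).mkQ x) ∈ LinearMap.range f := by
        rw [← Submodule.Quotient.mk_eq_zero]
        have h1 : (Submodule.Quotient.mk (s ((LinearMap.range f).mkQ x)) :
            (Fin n ⊕ κ → ℤ) ⧸ LinearMap.range f) = (LinearMap.range f).mkQ x := by
          have := congrArg (fun g => g ((LinearMap.range f).mkQ x)) hs
          simpa using this
        have h2 : (Submodule.Quotient.mk (x - s ((LinearMap.range f).mkQ x)) :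
            (Fin n ⊕ κ → ℤ) ⧸ LinearMap.range f) =
            Submodule.Quotient.mk x - Submodule.Quotient.mk (s ((LinearMap.range f).mkQ x)) := rfl
        rw [h2, h1, Submodule.mkQ_apply, sub_self]
      refine Submodule.mem_sup.mpr ⟨_, hker, s ((LinearMap.range f).mkQ x), ⟨_, rfl⟩, ?_⟩
      ring
  -- bases
  let bR : Module.Basis (Fin n) ℤ (LinearMap.range f) :=
    (Pi.basisFun ℤ (Fin n)).map (LinearEquiv.ofInjective f hinj)
  obtain ⟨m₀, bC⟩ := Submodule.basisOfPid (Pi.basisFun ℤ (Fin n ⊕ κ)) (LinearMap.range s)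
  let bM0 : Module.Basis (Fin n ⊕ Fin m₀) ℤ (Fin n ⊕ κ → ℤ) :=
    (bR.prod bC).map (Submodule.prodEquivOfIsCompl _ _ hcompl)
  have hcard : m₀ = Fintype.card κ := by
    have := Fintype.card_congr (bM0.indexEquiv (Pi.basisFun ℤ (Fin n ⊕ κ)))
    simpa using this
  let g : Fin m₀ ≃ κ := Fintype.equivOfCardEq (by simp [hcard])
  let bM : Module.Basis (Fin n ⊕ κ) ℤ (Fin n ⊕ κ → ℤ) :=
    bM0.reindex ((Equiv.refl (Fin n)).sumCongr g)
  refine ⟨(Pi.basisFun ℤ (Fin n ⊕ κ)).toMatrix bM, ?_, ?_⟩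
  · refine IsUnit.of_mul_eq_one (bM.toMatrix (Pi.basisFun ℤ (Fin n ⊕ κ))).det ?_
    rw [← Matrix.det_mul, Module.Basis.toMatrix_mul_toMatrix_flip, Matrix.det_one]
  · ext i j
    have h1 : bM (Sum.inl j) = f (Pi.single j 1) := by
      have e1 : bM (Sum.inl j) = bM0 (Sum.inl j) := by
        simp [bM]
      have e2 : bM0 (Sum.inl j) =
          (Submodule.prodEquivOfIsCompl _ _ hcompl) ((bR.prod bC) (Sum.inl j)) := by
        simp [bM0]
      rw [e1, e2, Module.Basis.prod_apply]
      simp [bR, Module.Basis.map_apply, Submodule.coe_prodEquivOfIsCompl,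
        LinearEquiv.ofInjective_apply, Pi.basisFun_apply]
    have h2 : (Pi.basisFun ℤ (Fin n ⊕ κ)).toMatrix bM i (Sum.inl j) = bM (Sum.inl j) i := by
      rw [Module.Basis.toMatrix_apply, Pi.basisFun_repr]
    show (Pi.basisFun ℤ (Fin n ⊕ κ)).toMatrix bM i (Sum.inl j) = L i j
    rw [h2, h1]
    show L.mulVec (Pi.single j 1) i = L i j
    rw [Matrix.mulVec_single]
    simp

/-- Columns of a unimodular matrix give a torus embedding. -/
lemma isTorusEmbedding_of_isUnit {κ : Type*} [Fintype κ] [DecidableEq κ] {n : ℕ}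
    (M : Matrix (Fin n ⊕ κ) (Fin n ⊕ κ) ℤ) (hM : IsUnit M.det) :
    IsTorusEmbedding (M.submatrix id Sum.inl) := by
  intro x hx i
  choose m hm using hx
  haveI := M.invertibleOfIsUnitDet hM
  set Minv : Matrix (Fin n ⊕ κ) (Fin n ⊕ κ) ℤ := ⅟M with hMinv
  have hinv : (Minv.map (Int.cast : ℤ → ℝ)) * (M.map (Int.cast : ℤ → ℝ)) = 1 := by
    have : ((Minv * M).map (Int.cast : ℤ → ℝ)) = 1 := by
      rw [hMinv, invOf_mul_self]
      ext i j
      simp [Matrix.one_apply, apply_ite]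
    rw [← this]
    exact (Matrix.map_mul (f := Int.castRingHom ℝ)).symm
  set x' : (Fin n ⊕ κ) → ℝ := Sum.elim x 0 with hx'
  have key : (M.map (Int.cast : ℤ → ℝ)).mulVec x' = fun j => (m j : ℝ) := by
    funext j
    rw [← hm j]
    simp [Matrix.mulVec, dotProduct, Fintype.sum_sum_type, x']
  have : x' = (Minv.map (Int.cast : ℤ → ℝ)).mulVec (fun j => (m j : ℝ)) := by
    rw [← key, Matrix.mulVec_mulVec, hinv, Matrix.one_mulVec]
  refine ⟨∑ p, Minv (Sum.inl i) p * m p, ?_⟩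
  have hxi : x i = x' (Sum.inl i) := rfl
  rw [hxi, this]
  simp [Matrix.mulVec, dotProduct]

section helpers
variable {κ : Type*} [Fintype κ] [DecidableEq κ] {n : ℕ}

lemma mul_submatrix_cols {l o o' : Type*} [Fintype κ] (X : Matrix l κ ℤ) (Y : Matrix κ o ℤ)
    (c : o' → o) : (X * Y).submatrix id c = X * Y.submatrix id c := by
  ext i j; simp [Matrix.mul_apply]

lemma colF (M : Matrix (Fin n ⊕ κ) (Fin n ⊕ κ) ℤ) (A : Matrix (Fin n) (Fin n) ℤ) :
    M * (Matrix.of fun p j => Sum.elim (fun a => A a j) (fun _ => (0:ℤ)) p :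
        Matrix (Fin n ⊕ κ) (Fin n) ℤ)
      = (M.submatrix id Sum.inl) * A := by
  ext i j
  simp [Matrix.mul_apply, Fintype.sum_sum_type]

lemma fromBlocks_submatrix_inl (A : Matrix (Fin n) (Fin n) ℤ) (S : Matrix (Fin n) κ ℤ)
    (A' : Matrix κ κ ℤ) :
    (Matrix.fromBlocks A S 0 A').submatrix id Sum.inl
      = Matrix.of fun p j => Sum.elim (fun a => A a j) (fun _ => (0:ℤ)) p := by
  ext p j
  cases p <;> simp [Matrix.fromBlocks]
end helpers


set_option maxHeartbeats 1000000 in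
/-- There exists a semiconjugacy from `A` to `⊕ᵢ₌₁ᵏ B` by a linear embedding
`ι : T^n → T^{nk}` (i.e. `ι ∘ A = (⊕ᵢ₌₁ᵏ B) ∘ ι` with `ι` an injective linear map)
if and only if there exist `M ∈ GL_{nk}(ℤ)`, an integer matrix `S` and
`A' ∈ GL_{n(k-1)}(ℤ)` with `(⊕ᵢ₌₁ᵏ B) M = M [[A, S], [0, A']]`. Here `⊕ᵢ₌₁ᵏ B` is
written on the index type `Fin n ⊕ (Fin n × Fin (k-1))`. -/
theorem stmt16 {n k : ℕ} (hn : 0 < n) (hk : 1 ≤ k)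
    (A B : Matrix (Fin n) (Fin n) ℤ) (hA : IsUnit A.det) (hB : IsUnit B.det) :
    (∃ L : Matrix (Fin n ⊕ Fin n × Fin (k - 1)) (Fin n) ℤ, IsTorusEmbedding L ∧
      Matrix.fromBlocks B 0 0 (Matrix.blockDiagonal fun _ : Fin (k - 1) => B) * L
        = L * A)
    ↔ (∃ M : Matrix (Fin n ⊕ Fin n × Fin (k - 1)) (Fin n ⊕ Fin n × Fin (k - 1)) ℤ,
        IsUnit M.det ∧
        ∃ S : Matrix (Fin n) (Fin n × Fin (k - 1)) ℤ,
        ∃ A' : Matrix (Fin n × Fin (k - 1)) (Fin n × Fin (k - 1)) ℤ, IsUnit A'.det ∧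
          Matrix.fromBlocks B 0 0 (Matrix.blockDiagonal fun _ : Fin (k - 1) => B) * M
            = M * Matrix.fromBlocks A S 0 A') := by
  classical
  set κ := Fin n × Fin (k - 1)
  set D : Matrix (Fin n ⊕ κ) (Fin n ⊕ κ) ℤ :=
    Matrix.fromBlocks B 0 0 (Matrix.blockDiagonal fun _ : Fin (k - 1) => B) with hD
  have hDdet : IsUnit D.det := by
    rw [hD, Matrix.det_fromBlocks_zero₂₁, Matrix.det_blockDiagonal]
    rw [Finset.prod_const]
    exact hB.mul (hB.pow _)
  constructor
  · rintro ⟨L, hemb, heq⟩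
    obtain ⟨M, hMu, hsub⟩ := exists_unimodular_extension L hemb
    haveI := M.invertibleOfIsUnitDet hMu
    set N : Matrix (Fin n ⊕ κ) (Fin n ⊕ κ) ℤ := ⅟M * (D * M) with hN
    have hMN : M * N = D * M := by
      rw [hN, ← Matrix.mul_assoc, mul_invOf_self, Matrix.one_mul]
    -- the inl-columns of N
    have hcol : N.submatrix id Sum.inl
        = Matrix.of fun p j => Sum.elim (fun a => A a j) (fun _ => (0:ℤ)) p := by
      have h1 : M * (N.submatrix id Sum.inl)
          = M * (Matrix.of fun p j => Sum.elim (fun a => A a j) (fun _ => (0:ℤ)) p :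
              Matrix (Fin n ⊕ κ) (Fin n) ℤ) := by
        rw [colF M A, ← mul_submatrix_cols M N, hMN, mul_submatrix_cols D M, hsub, heq]
      calc N.submatrix id Sum.inl = ⅟M * (M * (N.submatrix id Sum.inl)) := by
            rw [← Matrix.mul_assoc, invOf_mul_self, Matrix.one_mul]
        _ = _ := by rw [h1, ← Matrix.mul_assoc, invOf_mul_self, Matrix.one_mul]
    set S : Matrix (Fin n) κ ℤ := Matrix.of fun p q => N (Sum.inl p) (Sum.inr q) with hS
    set A' : Matrix κ κ ℤ := Matrix.of fun p q => N (Sum.inr p) (Sum.inr q) with hA'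
    have hNb : N = Matrix.fromBlocks A S 0 A' := by
      ext p q
      have hc := fun p => congrFun (congrFun hcol p)
      cases p with
      | inl a =>
        cases q with
        | inl j => simpa using hc (Sum.inl a) j
        | inr b => simp [hS, Matrix.fromBlocks]
      | inr b =>
        cases q with
        | inl j => simpa using hc (Sum.inr b) j
        | inr b' => simp [hA', Matrix.fromBlocks]
    have hdetN : A.det * A'.det = D.det := by
      have h : M.det * N.det = D.det * M.det := by
        rw [← Matrix.det_mul, hMN, Matrix.det_mul]
      rw [mul_comm D.det] at h
      have hM0 : M.det ≠ 0 := hMu.ne_zero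
      have := mul_left_cancel₀ hM0 h
      rw [hNb, Matrix.det_fromBlocks_zero₂₁] at this
      exact this
    have hA'u : IsUnit A'.det := isUnit_of_mul_isUnit_right (hdetN ▸ hDdet)
    exact ⟨M, hMu, S, A', hA'u, by rw [← hNb, hMN]⟩
  · rintro ⟨M, hMu, S, A', hA', heq⟩
    refine ⟨M.submatrix id Sum.inl, isTorusEmbedding_of_isUnit M hMu, ?_⟩
    rw [← mul_submatrix_cols D M, heq, mul_submatrix_cols M _, fromBlocks_submatrix_inl,
      colF M A]
end

section
/- Let B ∈ GL_n(Z) be irreducible with eigenvector v, Bv = βv, and let U = [[U₁,U₂],[U₃,U₄]] ∈ GL_{2n}(Z) commute with B ⊕ B. Then each U_i commutes with B, det(U) = det(U₁U₄ − U₂U₃), and writing U_i v = α_i v with α_i in R = (J:J), the element α₁α₄ − α₂α₃ is a unit in R if and only if det(U) = ±1. -/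
set_option synthInstance.maxHeartbeats 1000000
set_option maxHeartbeats 1000000

open Matrix Polynomial

theorem detBlockCommUnit {F : Type*} [Field F] {m : Type*} [Fintype m] [DecidableEq m]
    (A B C D : Matrix m m F) (h : C * D = D * C) (hD : IsUnit D.det) :
    (Matrix.fromBlocks A B C D).det = (A * D - B * C).det := by
  letI := D.invertibleOfIsUnitDet hD
  rw [det_fromBlocks₂₂]
  have hc : C * ⅟D = ⅟D * C := (Commute.invOf_right (h : Commute C D)).eq
  have h2 : B * ⅟D * C = B * C * ⅟D := by rw [mul_assoc, ← hc, mul_assoc]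
  calc det D * det (A - B * ⅟D * C) = det ((A - B * ⅟D * C) * D) := by rw [det_mul, mul_comm]
    _ = det (A * D - B * C) := by
        rw [Matrix.sub_mul, h2, mul_assoc (B*C), invOf_mul_self, mul_one]

theorem detBlockComm {F : Type*} [Field F] {m : Type*} [Fintype m] [DecidableEq m]
    (A B C D : Matrix m m F) (h : C * D = D * C) :
    (Matrix.fromBlocks A B C D).det = (A * D - B * C).det := by
  classical
  set cR : F →+* F[X] := Polynomial.C with hcR
  set j : F[X] →+* RatFunc F := algebraMap F[X] (RatFunc F) with hj
  set D' : Matrix m m F[X] := D.map cR + Matrix.diagonal (fun _ => (X : F[X])) with hD'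
  -- D' has nonzero determinant
  have hdet : D'.det ≠ 0 := by
    have : D'.det = (-D).charpoly := by
      rw [Matrix.charpoly, Matrix.charmatrix]
      congr 1
      rw [hD']
      ext i k
      by_cases hik : i = k <;>
        simp [Matrix.diagonal, Matrix.map_apply, hik, sub_eq_add_neg, add_comm, hcR]
    rw [this]
    exact (Matrix.charpoly_monic _).ne_zero
  -- the polynomial identity, proved in RatFunc F
  have key : (Matrix.fromBlocks (A.map cR) (B.map cR) (C.map cR) D').det
      = ((A.map cR) * D' - (B.map cR) * (C.map cR)).det := by
    have hinj : Function.Injective j := IsFractionRing.injective F[X] (RatFunc F)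
    apply hinj
    rw [RingHom.map_det, RingHom.map_det]
    simp only [RingHom.mapMatrix_apply]
    rw [Matrix.fromBlocks_map]
    have hcomm' : (C.map cR).map j * (D'.map j) = (D'.map j) * ((C.map cR).map j) := by
      have h1 : (C.map cR) * D' = D' * (C.map cR) := by
        rw [hD', Matrix.mul_add, Matrix.add_mul, ← Matrix.map_mul, ← Matrix.map_mul, h]
        congr 1
        ext i k
        simp [Matrix.mul_diagonal, Matrix.diagonal_mul, mul_comm]
      calc (C.map cR).map j * (D'.map j) = ((C.map cR) * D').map j := (Matrix.map_mul).symm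
        _ = (D' * (C.map cR)).map j := by rw [h1]
        _ = (D'.map j) * ((C.map cR).map j) := Matrix.map_mul
    have hunit : IsUnit (D'.map j).det := by
      rw [← RingHom.mapMatrix_apply, ← RingHom.map_det]
      exact isUnit_iff_ne_zero.2 (fun hz => hdet ((map_eq_zero_iff j hinj).1 hz))
    have := detBlockCommUnit ((A.map cR).map j) ((B.map cR).map j) ((C.map cR).map j)
      (D'.map j) hcomm' hunit
    rw [this, Matrix.map_sub _ (fun a b => map_sub j a b), Matrix.map_mul, Matrix.map_mul]
  -- evaluate at 0
  have := congrArg (Polynomial.evalRingHom (0 : F)) key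
  simp only [RingHom.map_det, RingHom.mapMatrix_apply] at this
  rw [Matrix.fromBlocks_map,
    Matrix.map_sub _ (fun a b => map_sub (Polynomial.evalRingHom (0:F)) a b),
    Matrix.map_mul, Matrix.map_mul] at this
  have hAB : ∀ M : Matrix m m F, (M.map cR).map (Polynomial.evalRingHom 0) = M := by
    intro M; ext i k; simp [Matrix.map_apply, hcR]
  have hDD : D'.map (Polynomial.evalRingHom 0) = D := by
    ext i k
    by_cases hik : i = k <;> simp [hD', Matrix.map_apply, Matrix.diagonal, hik, hcR]
  rwa [hAB, hAB, hAB, hDD] at this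

theorem centralizer_poly {n : ℕ} (hn : 0 < n) (Bq : Matrix (Fin n) (Fin n) ℚ)
    (hirr : Irreducible Bq.charpoly)
    (T : Matrix (Fin n) (Fin n) ℚ) (hT : T * Bq = Bq * T) :
    ∃ g : Polynomial ℚ, T = Polynomial.aeval Bq g := by
  classical
  haveI : Fact (Irreducible Bq.charpoly) := ⟨hirr⟩
  have hzero : ∀ a ∈ (Ideal.span {Bq.charpoly} : Ideal (Polynomial ℚ)),
      (Polynomial.aeval Bq).toRingHom a = 0 := by
    intro a ha
    obtain ⟨g, rfl⟩ := (Ideal.mem_span_singleton).1 ha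
    simp only [AlgHom.toRingHom_eq_coe, RingHom.coe_coe, _root_.map_mul]
    rw [Matrix.aeval_self_charpoly]
    exact zero_mul _
  let φ : AdjoinRoot Bq.charpoly →+* Matrix (Fin n) (Fin n) ℚ :=
    Ideal.Quotient.lift (Ideal.span {Bq.charpoly}) (Polynomial.aeval Bq).toRingHom hzero
  have hφmk : ∀ g : Polynomial ℚ,
      φ (AdjoinRoot.mk Bq.charpoly g) = Polynomial.aeval Bq g := by
    intro g; rfl
  have hφsmul : ∀ (a : ℚ) (x : AdjoinRoot Bq.charpoly), φ (a • x) = a • φ x := by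
    intro a x
    rw [Algebra.smul_def, _root_.map_mul]
    have : φ (algebraMap ℚ (AdjoinRoot Bq.charpoly) a)
        = algebraMap ℚ (Matrix (Fin n) (Fin n) ℚ) a := by
      exact RingHom.congr_fun (Subsingleton.elim (φ.comp (algebraMap ℚ (AdjoinRoot Bq.charpoly)))
        (algebraMap ℚ (Matrix (Fin n) (Fin n) ℚ))) a
    rw [Algebra.smul_def]
    congr 1
  -- module structure of V over AdjoinRoot Bq.charpoly
  letI smulF : SMul (AdjoinRoot Bq.charpoly) (Fin n → ℚ) := ⟨fun x w => (φ x).mulVec w⟩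
  have smul_def : ∀ (x : AdjoinRoot Bq.charpoly) (w : Fin n → ℚ),
      x • w = (φ x).mulVec w := fun _ _ => rfl
  letI modF : Module (AdjoinRoot Bq.charpoly) (Fin n → ℚ) :=
    { smul := fun x w => (φ x).mulVec w
      one_smul := fun w => by rw [smul_def]; simp
      mul_smul := fun x y w => by
        rw [smul_def, smul_def, smul_def, _root_.map_mul, Matrix.mulVec_mulVec]
      smul_zero := fun x => by rw [smul_def]; simp
      smul_add := fun x w₁ w₂ => by
        rw [smul_def, smul_def, smul_def, Matrix.mulVec_add]
      add_smul := fun x y w => by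
        rw [smul_def, smul_def, smul_def, map_add, Matrix.add_mulVec]
      zero_smul := fun w => by rw [smul_def]; simp }
  haveI : IsScalarTower ℚ (AdjoinRoot Bq.charpoly) (Fin n → ℚ) := by
    constructor
    intro a x w
    rw [smul_def, smul_def, hφsmul, Matrix.smul_mulVec]
  -- dimensions
  have hfne : Bq.charpoly ≠ 0 := (Matrix.charpoly_monic Bq).ne_zero
  have hdim : Module.finrank ℚ (AdjoinRoot Bq.charpoly) = n := by
    have := (AdjoinRoot.powerBasis hfne).finrank
    rw [this, AdjoinRoot.powerBasis_dim]
    simp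
  have htot : Module.finrank ℚ (AdjoinRoot Bq.charpoly)
        * Module.finrank (AdjoinRoot Bq.charpoly) (Fin n → ℚ)
      = Module.finrank ℚ (Fin n → ℚ) :=
    Module.finrank_mul_finrank ℚ (AdjoinRoot Bq.charpoly) (Fin n → ℚ)
  have hVd : Module.finrank ℚ (Fin n → ℚ) = n := Module.finrank_fin_fun ℚ
  have hone : Module.finrank (AdjoinRoot Bq.charpoly) (Fin n → ℚ) = 1 := by
    rw [hdim, hVd] at htot
    exact Nat.eq_of_mul_eq_mul_left hn (by rw [mul_one]; exact htot)
  obtain ⟨v₀, hv₀ne, hv₀⟩ := finrank_eq_one_iff'.1 hone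
  -- T commutes with all aeval values
  have hTB : Commute T Bq := hT
  have hcom : ∀ p : Polynomial ℚ,
      T * (Polynomial.aeval Bq p) = (Polynomial.aeval Bq p) * T := by
    intro p
    induction p using Polynomial.induction_on' with
    | add p q hp hq => rw [map_add, mul_add, add_mul, hp, hq]
    | monomial k a =>
      rw [aeval_monomial]
      have h1 : T * Bq ^ k = Bq ^ k * T := (hTB.pow_right k).eq
      rw [← mul_assoc, ← Algebra.commutes a T, mul_assoc, h1, ← mul_assoc]
  -- the scalar c
  obtain ⟨c, hc⟩ := hv₀ (T.mulVec v₀)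
  obtain ⟨g, hg⟩ := AdjoinRoot.mk_surjective c
  refine ⟨g, ?_⟩
  have h1 : T.mulVec v₀ = (Polynomial.aeval Bq g).mulVec v₀ := by
    calc T.mulVec v₀ = c • v₀ := hc.symm
      _ = (Polynomial.aeval Bq g).mulVec v₀ := by rw [← hg, smul_def, hφmk]
  have hmain : ∀ w : Fin n → ℚ, T.mulVec w = (Polynomial.aeval Bq g).mulVec w := by
    intro w
    obtain ⟨a, ha⟩ := hv₀ w
    obtain ⟨p, hp⟩ := AdjoinRoot.mk_surjective a
    have haw : w = (Polynomial.aeval Bq p).mulVec v₀ := by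
      rw [← ha, smul_def, ← hp, hφmk]
    rw [haw, Matrix.mulVec_mulVec, Matrix.mulVec_mulVec, hcom p, ← Matrix.mulVec_mulVec, h1,
      Matrix.mulVec_mulVec, ← _root_.map_mul, mul_comm p g, _root_.map_mul]
  ext i k
  simpa using congrFun (hmain (Pi.single k 1)) i

theorem eigMulVec {K : Type*} [Field K] [CharZero K] {n : ℕ}
    (M : Matrix (Fin n) (Fin n) K) (β : K) (v : Fin n → K) (h : M.mulVec v = β • v)
    (p : Polynomial ℚ) : (Polynomial.aeval M p).mulVec v = (Polynomial.aeval β p) • v := by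
  have hpow : ∀ k : ℕ, (M ^ k).mulVec v = (β ^ k) • v := by
    intro k
    induction k with
    | zero => simp
    | succ k ih =>
        rw [pow_succ, ← Matrix.mulVec_mulVec, h, Matrix.mulVec_smul, ih, smul_smul, pow_succ,
          mul_comm]
  induction p using Polynomial.induction_on' with
  | add p q hp hq => rw [map_add, map_add, Matrix.add_mulVec, hp, hq, add_smul]
  | monomial k a =>
      rw [aeval_monomial, aeval_monomial, Algebra.algebraMap_eq_smul_one, smul_mul_assoc,
        one_mul, Matrix.smul_mulVec, hpow, Algebra.algebraMap_eq_smul_one, smul_mul_assoc,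
        one_mul]
      exact (smul_assoc a (β ^ k) v).symm

theorem memColon {K : Type*} [Field K] {n : ℕ} (W : Matrix (Fin n) (Fin n) ℤ)
    (v : Fin n → K) (α : K) (h : (W.map (algebraMap ℤ K)).mulVec v = α • v) :
    α ∈ colonSub (Submodule.span ℤ (Set.range v)) (Submodule.span ℤ (Set.range v)) := by
  intro y hy
  induction hy using Submodule.span_induction with
  | mem z hz =>
      obtain ⟨j, rfl⟩ := hz
      have : α * v j = ∑ k, (W j k : K) * v k := by
        have := congrFun h j
        simp only [Pi.smul_apply, smul_eq_mul] at this
        rw [← this]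
        simp [Matrix.mulVec, dotProduct, Matrix.map_apply]
      rw [this]
      refine Submodule.sum_mem _ (fun k _ => ?_)
      have : (W j k : K) * v k = (W j k : ℤ) • v k := by
        rw [zsmul_eq_mul]
      rw [this]
      exact Submodule.smul_mem _ _ (Submodule.subset_span ⟨k, rfl⟩)
  | zero => simp
  | add a b _ _ ha hb =>
      rw [mul_add]
      exact Submodule.add_mem _ ha hb
  | smul c a _ ha =>
      rw [mul_smul_comm]
      exact Submodule.smul_mem _ _ ha

/-- Let `B ∈ GL_n(ℤ)` be irreducible with eigenvector `v`, `Bv = βv`, and let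
`U = [[U₁,U₂],[U₃,U₄]] ∈ GL_{2n}(ℤ)` commute with `B ⊕ B`. Then each `Uᵢ` commutes with
`B`, `det U = det (U₁U₄ − U₂U₃)`, and writing `Uᵢ v = αᵢ v` with `αᵢ ∈ R = (J : J)`,
the element `α₁α₄ − α₂α₃` is a unit in `R` if and only if `det U = ±1`. -/
theorem stmt17 {K : Type*} [Field K] [CharZero K] {n : ℕ} (hn : 0 < n)
    (B : Matrix (Fin n) (Fin n) ℤ) (hB : IsUnit B.det)
    (hirr : Irreducible (Polynomial.map (Int.castRingHom ℚ) B.charpoly))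
    (β : K) (hβ : Polynomial.aeval β B.charpoly = 0)
    (v : Fin n → K) (hv0 : v ≠ 0)
    (hv : Matrix.mulVec (B.map (algebraMap ℤ K)) v = β • v)
    (U₁ U₂ U₃ U₄ : Matrix (Fin n) (Fin n) ℤ)
    (hU : IsUnit (Matrix.fromBlocks U₁ U₂ U₃ U₄).det)
    (hcomm : Matrix.fromBlocks U₁ U₂ U₃ U₄ * Matrix.fromBlocks B 0 0 B
      = Matrix.fromBlocks B 0 0 B * Matrix.fromBlocks U₁ U₂ U₃ U₄) :
    (U₁ * B = B * U₁ ∧ U₂ * B = B * U₂ ∧ U₃ * B = B * U₃ ∧ U₄ * B = B * U₄) ∧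
    (Matrix.fromBlocks U₁ U₂ U₃ U₄).det = (U₁ * U₄ - U₂ * U₃).det ∧
    ∃ α₁ α₂ α₃ α₄ : K,
      (Matrix.mulVec (U₁.map (algebraMap ℤ K)) v = α₁ • v ∧
       Matrix.mulVec (U₂.map (algebraMap ℤ K)) v = α₂ • v ∧
       Matrix.mulVec (U₃.map (algebraMap ℤ K)) v = α₃ • v ∧
       Matrix.mulVec (U₄.map (algebraMap ℤ K)) v = α₄ • v) ∧
      (∀ i ∈ [α₁, α₂, α₃, α₄],
        i ∈ colonSub (Submodule.span ℤ (Set.range v)) (Submodule.span ℤ (Set.range v))) ∧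
      ((∃ y ∈ colonSub (Submodule.span ℤ (Set.range v)) (Submodule.span ℤ (Set.range v)),
          (α₁ * α₄ - α₂ * α₃) * y = 1)
        ↔ IsUnit (Matrix.fromBlocks U₁ U₂ U₃ U₄).det) := by
  classical
  -- Part 1: the blocks commute with B
  have hbl := hcomm
  rw [Matrix.fromBlocks_multiply, Matrix.fromBlocks_multiply] at hbl
  simp only [Matrix.mul_zero, Matrix.zero_mul, add_zero, zero_add] at hbl
  rw [Matrix.fromBlocks_inj] at hbl
  obtain ⟨h1, h2, h3, h4⟩ := hbl
  -- setup over ℚ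
  set ic : ℤ →+* ℚ := Int.castRingHom ℚ with hic
  have hq : ∀ {U V : Matrix (Fin n) (Fin n) ℤ}, U * V = V * U →
      U.map ic * V.map ic = V.map ic * U.map ic := by
    intro U V h
    rw [← Matrix.map_mul, ← Matrix.map_mul, h]
  have hirr' : Irreducible (B.map ic).charpoly := by
    rw [Matrix.charpoly_map]; exact hirr
  obtain ⟨g₁, hg₁⟩ := centralizer_poly hn (B.map ic) hirr' (U₁.map ic) (hq h1)
  obtain ⟨g₂, hg₂⟩ := centralizer_poly hn (B.map ic) hirr' (U₂.map ic) (hq h2)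
  obtain ⟨g₃, hg₃⟩ := centralizer_poly hn (B.map ic) hirr' (U₃.map ic) (hq h3)
  obtain ⟨g₄, hg₄⟩ := centralizer_poly hn (B.map ic) hirr' (U₄.map ic) (hq h4)
  -- Part 2: the determinant identity
  have comm34 : U₃.map ic * U₄.map ic = U₄.map ic * U₃.map ic := by
    rw [hg₃, hg₄, ← _root_.map_mul, mul_comm, _root_.map_mul]
  have part2 : (Matrix.fromBlocks U₁ U₂ U₃ U₄).det = (U₁ * U₄ - U₂ * U₃).det := by
    have h := detBlockComm (U₁.map ic) (U₂.map ic) (U₃.map ic) (U₄.map ic) comm34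
    rw [← Matrix.fromBlocks_map, ← Matrix.map_mul, ← Matrix.map_mul,
      ← Matrix.map_sub _ (fun a b => map_sub ic a b), ← RingHom.mapMatrix_apply,
      ← RingHom.mapMatrix_apply, ← RingHom.map_det, ← RingHom.map_det] at h
    exact (Int.cast_injective (α := ℚ)) h
  -- over K
  have hZK : (algebraMap ℤ K) = (algebraMap ℚ K).comp ic := Subsingleton.elim _ _
  have hBKq : B.map (algebraMap ℤ K) = (B.map ic).map (algebraMap ℚ K) := by
    rw [Matrix.map_map]
    congr 1
    rw [hZK, RingHom.coe_comp]
  have toK : ∀ (U : Matrix (Fin n) (Fin n) ℤ) (g : Polynomial ℚ),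
      U.map ic = Polynomial.aeval (B.map ic) g →
      U.map (algebraMap ℤ K) = Polynomial.aeval (B.map (algebraMap ℤ K)) g := by
    intro U g hU'
    have hmm : U.map (algebraMap ℤ K) = (U.map ic).map (algebraMap ℚ K) := by
      rw [Matrix.map_map]
      congr 1
      rw [hZK, RingHom.coe_comp]
    have := Polynomial.aeval_algHom_apply ((Algebra.ofId ℚ K).mapMatrix) (B.map ic) g
    simp only [AlgHom.mapMatrix_apply] at this
    rw [hmm, hU', hBKq]
    have hco : ⇑(Algebra.ofId ℚ K) = ⇑(algebraMap ℚ K) := rfl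
    rw [← hco, this, hco]
  have e₁ : (U₁.map (algebraMap ℤ K)).mulVec v = (Polynomial.aeval β g₁) • v := by
    rw [toK U₁ g₁ hg₁]; exact eigMulVec _ β v hv g₁
  have e₂ : (U₂.map (algebraMap ℤ K)).mulVec v = (Polynomial.aeval β g₂) • v := by
    rw [toK U₂ g₂ hg₂]; exact eigMulVec _ β v hv g₂
  have e₃ : (U₃.map (algebraMap ℤ K)).mulVec v = (Polynomial.aeval β g₃) • v := by
    rw [toK U₃ g₃ hg₃]; exact eigMulVec _ β v hv g₃
  have e₄ : (U₄.map (algebraMap ℤ K)).mulVec v = (Polynomial.aeval β g₄) • v := by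
    rw [toK U₄ g₄ hg₄]; exact eigMulVec _ β v hv g₄
  refine ⟨⟨h1, h2, h3, h4⟩, part2,
    Polynomial.aeval β g₁, Polynomial.aeval β g₂, Polynomial.aeval β g₃, Polynomial.aeval β g₄,
    ⟨e₁, e₂, e₃, e₄⟩, ?_, ?_⟩
  · intro x hx
    simp only [List.mem_cons, List.not_mem_nil, or_false] at hx
    rcases hx with rfl | rfl | rfl | rfl
    exacts [memColon U₁ v _ e₁, memColon U₂ v _ e₂, memColon U₃ v _ e₃, memColon U₄ v _ e₄]
  · refine ⟨fun _ => hU, fun _ => ?_⟩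
    -- construct the inverse element
    set W : Matrix (Fin n) (Fin n) ℤ := U₁ * U₄ - U₂ * U₃ with hWdef
    have hdetW : IsUnit W.det := by rw [← part2]; exact hU
    letI := W.invertibleOfIsUnitDet hdetW
    have hWB : W * B = B * W := by
      rw [hWdef, Matrix.sub_mul, Matrix.mul_sub, Matrix.mul_assoc U₁, h4,
        Matrix.mul_assoc U₂, h3, ← Matrix.mul_assoc U₁, h1, ← Matrix.mul_assoc U₂, h2,
        Matrix.mul_assoc, Matrix.mul_assoc]
    have hW'B : ⅟W * B = B * ⅟W := by
      have hc : Commute B W := hWB.symm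
      exact (hc.invOf_right).eq.symm
    obtain ⟨gw, hgw⟩ := centralizer_poly hn (B.map ic) hirr' ((⅟W).map ic) (hq hW'B)
    have eW' : ((⅟W).map (algebraMap ℤ K)).mulVec v = (Polynomial.aeval β gw) • v := by
      rw [toK _ _ hgw]; exact eigMulVec _ β v hv gw
    refine ⟨Polynomial.aeval β gw, memColon _ v _ eW', ?_⟩
    -- eigenvalue of W over K
    have eW : (W.map (algebraMap ℤ K)).mulVec v
        = ((Polynomial.aeval β g₁) * (Polynomial.aeval β g₄)
            - (Polynomial.aeval β g₂) * (Polynomial.aeval β g₃)) • v := by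
      have hmap : W.map (algebraMap ℤ K)
          = U₁.map (algebraMap ℤ K) * U₄.map (algebraMap ℤ K)
            - U₂.map (algebraMap ℤ K) * U₃.map (algebraMap ℤ K) := by
        rw [hWdef, Matrix.map_sub _ (fun a b => map_sub (algebraMap ℤ K) a b),
          Matrix.map_mul, Matrix.map_mul]
      rw [hmap, Matrix.sub_mulVec, ← Matrix.mulVec_mulVec, e₄, Matrix.mulVec_smul, e₁,
        ← Matrix.mulVec_mulVec, e₃, Matrix.mulVec_smul, e₂, smul_smul, smul_smul, ← sub_smul,
        mul_comm (Polynomial.aeval β g₄), mul_comm (Polynomial.aeval β g₃)]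
    -- W * ⅟W = 1 over K
    have hprod : (W.map (algebraMap ℤ K)) * ((⅟W).map (algebraMap ℤ K)) = 1 := by
      rw [← Matrix.map_mul, mul_invOf_self]
      exact Matrix.map_one _ (map_zero _) (map_one _)
    have hval : (((Polynomial.aeval β g₁) * (Polynomial.aeval β g₄)
        - (Polynomial.aeval β g₂) * (Polynomial.aeval β g₃)) * Polynomial.aeval β gw) • v = v := by
      have hh := congrArg (fun M => Matrix.mulVec M v) hprod
      simp only [Matrix.one_mulVec] at hh
      rw [← Matrix.mulVec_mulVec, eW', Matrix.mulVec_smul, eW, smul_smul] at hh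
      rw [mul_comm (Polynomial.aeval β gw)] at hh
      exact hh
    obtain ⟨j, hj⟩ := Function.ne_iff.1 hv0
    have hj' : v j ≠ 0 := hj
    have h' := congrFun hval j
    simp only [Pi.smul_apply, smul_eq_mul] at h'
    exact mul_right_cancel₀ hj' (by rw [one_mul]; exact h')
end

section
/- Let B ∈ GL_n(Z) be irreducible. If ξ ∈ GL_{2n}(Z) satisfies (B ⊕ B)ξ = ξ(B⁻¹ ⊕ B⁻¹), then for every M ∈ GL_{2n}(Z) such that M⁻¹(B ⊕ B)M is block diagonal (of n×n blocks), both (ξM)⁻¹(B ⊕ B)(ξM) and (ξ⁻¹M)⁻¹(B ⊕ B)(ξ⁻¹M) are block diagonal; moreover ξ does not commute with B ⊕ B provided B ≠ B⁻¹. -/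
/-- Let `B ∈ GL_n(ℤ)` be irreducible. If `ξ ∈ GL_{2n}(ℤ)` satisfies
`(B ⊕ B) ξ = ξ (B⁻¹ ⊕ B⁻¹)`, then for every `M ∈ GL_{2n}(ℤ)` such that
`M⁻¹ (B ⊕ B) M` is block diagonal (in `n × n` blocks), both
`(ξM)⁻¹ (B ⊕ B) (ξM)` and `(ξ⁻¹M)⁻¹ (B ⊕ B) (ξ⁻¹M)` are block diagonal; moreover
`ξ` does not commute with `B ⊕ B` provided `B ≠ B⁻¹`. -/
theorem stmt18 {n : ℕ} (hn : 0 < n)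
    (B : Matrix (Fin n) (Fin n) ℤ) (hB : IsUnit B.det)
    (hirr : Irreducible (Polynomial.map (Int.castRingHom ℚ) B.charpoly))
    (ξ : Matrix (Fin n ⊕ Fin n) (Fin n ⊕ Fin n) ℤ) (hξ : IsUnit ξ.det)
    (hrel : Matrix.fromBlocks B 0 0 B * ξ = ξ * Matrix.fromBlocks B⁻¹ 0 0 B⁻¹) :
    (∀ M : Matrix (Fin n ⊕ Fin n) (Fin n ⊕ Fin n) ℤ, IsUnit M.det →
      (∃ P Q : Matrix (Fin n) (Fin n) ℤ,
        M⁻¹ * Matrix.fromBlocks B 0 0 B * M = Matrix.fromBlocks P 0 0 Q) →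
      ((∃ P Q : Matrix (Fin n) (Fin n) ℤ,
          (ξ * M)⁻¹ * Matrix.fromBlocks B 0 0 B * (ξ * M) = Matrix.fromBlocks P 0 0 Q) ∧
       (∃ P Q : Matrix (Fin n) (Fin n) ℤ,
          (ξ⁻¹ * M)⁻¹ * Matrix.fromBlocks B 0 0 B * (ξ⁻¹ * M)
            = Matrix.fromBlocks P 0 0 Q))) ∧
    (B ≠ B⁻¹ →
      Matrix.fromBlocks B 0 0 B * ξ ≠ ξ * Matrix.fromBlocks B 0 0 B) := by
  set D : Matrix (Fin n ⊕ Fin n) (Fin n ⊕ Fin n) ℤ := Matrix.fromBlocks B 0 0 B with hD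
  have hDdet : IsUnit D.det := by
    rw [hD, Matrix.det_fromBlocks_zero₁₂]
    exact hB.mul hB
  -- D⁻¹ is the block diagonal of B⁻¹
  have hDinv : D⁻¹ = Matrix.fromBlocks B⁻¹ 0 0 B⁻¹ := by
    apply Matrix.inv_eq_right_inv
    rw [hD, Matrix.fromBlocks_multiply]
    simp [Matrix.mul_nonsing_inv B hB]
  have hξinv : ξ⁻¹ * ξ = 1 := Matrix.nonsing_inv_mul ξ hξ
  have hξinv' : ξ * ξ⁻¹ = 1 := Matrix.mul_nonsing_inv ξ hξ
  have hrel' : D * ξ = ξ * D⁻¹ := by rw [hDinv]; exact hrel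
  -- ξ⁻¹ D ξ = D⁻¹
  have hconj : ξ⁻¹ * D * ξ = D⁻¹ := by
    rw [Matrix.mul_assoc, hrel', ← Matrix.mul_assoc, hξinv, Matrix.one_mul]
  -- ξ D ξ⁻¹ = D⁻¹
  have hconj2 : ξ * D * ξ⁻¹ = D⁻¹ := by
    have h1 : ξ * D = D⁻¹ * ξ := by
      calc ξ * D = D⁻¹ * (D * ξ) * D := by
            rw [← Matrix.mul_assoc, Matrix.nonsing_inv_mul D hDdet, Matrix.one_mul]
        _ = D⁻¹ * (ξ * D⁻¹) * D := by rw [hrel']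
        _ = D⁻¹ * ξ := by
            rw [Matrix.mul_assoc, Matrix.mul_assoc, Matrix.nonsing_inv_mul D hDdet,
              Matrix.mul_one]
    rw [h1, Matrix.mul_assoc, hξinv', Matrix.mul_one]
  constructor
  · intro M hM ⟨P, Q, hPQ⟩
    have hMinv : M⁻¹ * M = 1 := Matrix.nonsing_inv_mul M hM
    have hMinv' : M * M⁻¹ = 1 := Matrix.mul_nonsing_inv M hM
    -- P and Q are units
    have hPQdet : IsUnit ((Matrix.fromBlocks P 0 0 Q).det) := by
      rw [← hPQ]
      simpa using ((Matrix.isUnit_nonsing_inv_det M hM).mul hDdet).mul hM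
    rw [Matrix.det_fromBlocks_zero₁₂] at hPQdet
    have hP : IsUnit P.det := isUnit_of_mul_isUnit_left hPQdet
    have hQ : IsUnit Q.det := isUnit_of_mul_isUnit_right hPQdet
    -- both conjugates equal M⁻¹ D⁻¹ M = fromBlocks P⁻¹ 0 0 Q⁻¹
    have key : M⁻¹ * D⁻¹ * M = Matrix.fromBlocks P⁻¹ 0 0 Q⁻¹ := by
      have h2 : D⁻¹ = M * Matrix.fromBlocks P⁻¹ 0 0 Q⁻¹ * M⁻¹ := by
        have hD' : D = M * Matrix.fromBlocks P 0 0 Q * M⁻¹ := by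
          rw [← hPQ]
          simp only [← Matrix.mul_assoc]
          rw [hMinv', Matrix.one_mul, Matrix.mul_assoc, hMinv', Matrix.mul_one]
        apply Matrix.inv_eq_right_inv
        rw [hD']
        have : Matrix.fromBlocks P 0 0 Q * Matrix.fromBlocks P⁻¹ 0 0 Q⁻¹ = 1 := by
          rw [Matrix.fromBlocks_multiply]
          simp [Matrix.mul_nonsing_inv P hP, Matrix.mul_nonsing_inv Q hQ]
        calc M * Matrix.fromBlocks P 0 0 Q * M⁻¹ *
              (M * Matrix.fromBlocks P⁻¹ 0 0 Q⁻¹ * M⁻¹)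
            = M * (Matrix.fromBlocks P 0 0 Q * (M⁻¹ * M) *
                Matrix.fromBlocks P⁻¹ 0 0 Q⁻¹) * M⁻¹ := by
              simp only [Matrix.mul_assoc]
          _ = 1 := by rw [hMinv]; simp [this, Matrix.mul_assoc, hMinv']
      rw [h2]
      simp only [← Matrix.mul_assoc]
      rw [hMinv, Matrix.one_mul, Matrix.mul_assoc, hMinv, Matrix.mul_one]
    constructor
    · refine ⟨P⁻¹, Q⁻¹, ?_⟩
      rw [Matrix.mul_inv_rev, ← key, ← hconj]
      simp only [Matrix.mul_assoc]
    · refine ⟨P⁻¹, Q⁻¹, ?_⟩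
      rw [Matrix.mul_inv_rev, Matrix.nonsing_inv_nonsing_inv ξ hξ, ← key, ← hconj2]
      simp only [Matrix.mul_assoc]
  · intro hBne hcomm
    apply hBne
    have : ξ * D = ξ * Matrix.fromBlocks B⁻¹ 0 0 B⁻¹ := by rw [← hcomm, hrel]
    have h3 : D = Matrix.fromBlocks B⁻¹ 0 0 B⁻¹ := by
      have := congrArg (fun X => ξ⁻¹ * X) this
      simpa [← Matrix.mul_assoc, hξinv] using this
    have := congrArg Matrix.toBlocks₁₁ h3
    simpa [hD, Matrix.toBlocks_fromBlocks₁₁] using this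
end
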